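/- arXiv:1502.05904 — 5 statements merged into one kernel-verified Lean document; each statement's English description precedes it below -/
import Mathlib

section
/- If P is a complex polynomial of degree n, then the maximum of |P'(z)| over the unit circle |z|=1 is at most n times the maximum of |P(z)| over |z|=1. -/
open Polynomial Real Complex


private lemma key_pos {w r : ℂ} (hw : 1 ≤ ‖w‖) (hr : ‖r‖ < 1) :
    0 < (w * (starRingEnd ℂ) (w - r)).re := by
  have h1 : (w * (starRingEnd ℂ) r).re ≤ ‖w‖ * ‖r‖ := by
    refine (Complex.re_le_norm _).trans ?_
    rw [norm_mul, Complex.norm_conj]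
  have h2 : (w * (starRingEnd ℂ) (w - r)).re = Complex.normSq w - (w * (starRingEnd ℂ) r).re := by
    rw [map_sub, mul_sub, Complex.sub_re, Complex.mul_conj, Complex.ofReal_re]
  have h3 : Complex.normSq w = ‖w‖ ^ 2 := Complex.normSq_eq_norm_sq w
  have h0 : (0:ℝ) ≤ ‖r‖ := norm_nonneg r
  nlinarith

private lemma eval_prod_ne_zero {w : ℂ} (hw : 1 ≤ ‖w‖) (m : Multiset ℂ)
    (hm : ∀ r ∈ m, ‖r‖ < 1) :
    ((m.map fun r => X - C r).prod).eval w ≠ 0 := by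
  rw [eval_multiset_prod]
  refine Multiset.prod_ne_zero ?_
  simp only [Multiset.mem_map]
  rintro ⟨q, hq, hq0⟩
  rcases hq with ⟨r, hr, rfl⟩
  simp only [eval_sub, eval_X, eval_C, sub_eq_zero] at hq0
  have := hm r hr
  rw [← hq0] at this
  exact absurd hw (not_le.2 (lt_of_lt_of_le this le_rfl))

private lemma gl_nonneg {w : ℂ} (hw : 1 ≤ ‖w‖) (m : Multiset ℂ)
    (hm : ∀ r ∈ m, ‖r‖ < 1) :
    0 ≤ (w * (Polynomial.derivative (m.map fun r => X - C r).prod).eval w *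
      (starRingEnd ℂ) (((m.map fun r => X - C r).prod).eval w)).re := by
  induction m using Multiset.induction_on with
  | empty => simp
  | cons r m ih =>
    have hr : ‖r‖ < 1 := hm r (Multiset.mem_cons_self r m)
    have hm' : ∀ s ∈ m, ‖s‖ < 1 := fun s hs => hm s (Multiset.mem_cons_of_mem hs)
    set a := ((m.map fun r => X - C r).prod).eval w with ha
    set a' := (Polynomial.derivative (m.map fun r => X - C r).prod).eval w with ha'
    have expand : w * (Polynomial.derivative ((r ::ₘ m).map fun r => X - C r).prod).eval w *
        (starRingEnd ℂ) ((((r ::ₘ m).map fun r => X - C r).prod).eval w) =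
        (Complex.normSq a : ℂ) * (w * (starRingEnd ℂ) (w - r)) +
        (Complex.normSq (w - r) : ℂ) * (w * a' * (starRingEnd ℂ) a) := by
      rw [Multiset.map_cons, Multiset.prod_cons, derivative_mul]
      simp only [derivative_sub, derivative_X, derivative_C, sub_zero, one_mul, eval_add,
        eval_mul, eval_sub, eval_X, eval_C, ← ha, ← ha', map_mul, map_sub,
        ← Complex.mul_conj]
      ring
    rw [expand, Complex.add_re, Complex.re_ofReal_mul, Complex.re_ofReal_mul]
    have hane : a ≠ 0 := eval_prod_ne_zero hw m hm'
    have h1 : 0 < Complex.normSq a := Complex.normSq_pos.2 hane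
    have h2 := key_pos hw hr
    have h3 : 0 ≤ Complex.normSq (w - r) := Complex.normSq_nonneg _
    have h4 := ih hm'
    positivity

private lemma gl_pos {w : ℂ} (hw : 1 ≤ ‖w‖) (m : Multiset ℂ) (hne : m ≠ 0)
    (hm : ∀ r ∈ m, ‖r‖ < 1) :
    0 < (w * (Polynomial.derivative (m.map fun r => X - C r).prod).eval w *
      (starRingEnd ℂ) (((m.map fun r => X - C r).prod).eval w)).re := by
  obtain ⟨r, hr⟩ := Multiset.exists_mem_of_ne_zero hne
  obtain ⟨m', rfl⟩ : ∃ m', m = r ::ₘ m' := ⟨m.erase r, (Multiset.cons_erase hr).symm⟩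
  have hrlt : ‖r‖ < 1 := hm r (Multiset.mem_cons_self r m')
  have hm' : ∀ s ∈ m', ‖s‖ < 1 := fun s hs => hm s (Multiset.mem_cons_of_mem hs)
  set a := ((m'.map fun r => X - C r).prod).eval w with ha
  set a' := (Polynomial.derivative (m'.map fun r => X - C r).prod).eval w with ha'
  have expand : w * (Polynomial.derivative ((r ::ₘ m').map fun r => X - C r).prod).eval w *
      (starRingEnd ℂ) ((((r ::ₘ m').map fun r => X - C r).prod).eval w) =
      (Complex.normSq a : ℂ) * (w * (starRingEnd ℂ) (w - r)) +
      (Complex.normSq (w - r) : ℂ) * (w * a' * (starRingEnd ℂ) a) := by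
    rw [Multiset.map_cons, Multiset.prod_cons, derivative_mul]
    simp only [derivative_sub, derivative_X, derivative_C, sub_zero, one_mul, eval_add,
      eval_mul, eval_sub, eval_X, eval_C, ← ha, ← ha', map_mul, map_sub,
      ← Complex.mul_conj]
    ring
  rw [expand, Complex.add_re, Complex.re_ofReal_mul, Complex.re_ofReal_mul]
  have hane : a ≠ 0 := eval_prod_ne_zero hw m' hm'
  have h1 : 0 < Complex.normSq a := Complex.normSq_pos.2 hane
  have h2 := key_pos hw hrlt
  have h3 : 0 ≤ Complex.normSq (w - r) := Complex.normSq_nonneg _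
  have h4 := gl_nonneg hw m' hm'
  nlinarith


private lemma reflect_eval {P : Polynomial ℂ} {n : ℕ} (hPn : P.natDegree ≤ n) {x : ℂ}
    (hx : x ≠ 0) : (reflect n P).eval x⁻¹ * x ^ n = P.eval x := by
  letI : Invertible x := invertibleOfNonzero hx
  have key : eval₂ (RingHom.id ℂ) (⅟ x) (reflect n P) * x ^ n = eval₂ (RingHom.id ℂ) x P :=
    eval₂_reflect_mul_pow (RingHom.id ℂ) x n P hPn
  rw [invOf_eq_inv] at key; exact key

private lemma abs_eval_le_pow {P : Polynomial ℂ} {n : ℕ} (hPn : P.natDegree ≤ n) {M : ℝ}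
    (hM : ∀ w : ℂ, ‖w‖ = 1 → ‖P.eval w‖ ≤ M) :
    ∀ z : ℂ, 1 ≤ ‖z‖ → ‖P.eval z‖ ≤ M * ‖z‖ ^ n := by
  set R := reflect n P with hR
  have hRbound : ∀ ζ : ℂ, ‖ζ‖ ≤ 1 → ‖R.eval ζ‖ ≤ M := by
    intro ζ hζ
    have hU : Bornology.IsBounded (Metric.ball (0:ℂ) 1) := Metric.isBounded_ball
    have hd : DiffContOnCl ℂ (fun ξ => R.eval ξ) (Metric.ball (0:ℂ) 1) :=
      (R.differentiable).diffContOnCl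
    have hcl : ζ ∈ closure (Metric.ball (0:ℂ) 1) := by
      rw [closure_ball (0:ℂ) one_ne_zero, Metric.mem_closedBall, dist_zero_right]
      exact hζ
    refine Complex.norm_le_of_forall_mem_frontier_norm_le hU hd (fun w hw => ?_) hcl
    rw [frontier_ball (0:ℂ) one_ne_zero, mem_sphere_iff_norm, sub_zero] at hw
    have hw1 : ‖w‖ = 1 := hw
    have hw0 : w ≠ 0 := by intro h; rw [h] at hw1; simp at hw1
    have hwi : ‖w⁻¹‖ = 1 := by rw [norm_inv, hw1, inv_one]
    have hwi0 : w⁻¹ ≠ 0 := inv_ne_zero hw0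
    have key := reflect_eval hPn hwi0
    rw [inv_inv] at key
    have : ‖R.eval w‖ * ‖w⁻¹‖ ^ n = ‖P.eval w⁻¹‖ := by
      rw [← norm_pow, ← norm_mul, key]
    rw [hwi, one_pow, mul_one] at this
    calc ‖R.eval w‖ = ‖P.eval w⁻¹‖ := this
      _ ≤ M := hM _ hwi
  intro z hz
  have hz0 : z ≠ 0 := by
    intro h; rw [h] at hz; simp at hz; linarith
  have key := reflect_eval hPn hz0
  have hzi : ‖z⁻¹‖ ≤ 1 := by
    rw [norm_inv]
    exact inv_le_one_of_one_le₀ hz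
  calc ‖P.eval z‖ = ‖R.eval z⁻¹‖ * ‖z‖ ^ n := by
        rw [← norm_pow, ← norm_mul, key]
    _ ≤ M * ‖z‖ ^ n := by
        have := hRbound z⁻¹ hzi
        have h0 : (0:ℝ) ≤ ‖z‖ ^ n := by positivity
        exact mul_le_mul_of_nonneg_right this h0


theorem bernstein_inequality (n : ℕ) (hn : 1 ≤ n) (P : Polynomial ℂ)
    (hP : P.natDegree = n) (z : ℂ) (hz : ‖z‖ = 1) :
    ‖P.derivative.eval z‖ ≤
      (n : ℝ) * sSup ((fun w => ‖P.eval w‖) '' {w : ℂ | ‖w‖ = 1}) := by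
  set S := (fun w => ‖P.eval w‖) '' {w : ℂ | ‖w‖ = 1} with hSdef
  set M := sSup S with hMdef
  have hset : {w : ℂ | ‖w‖ = 1} = Metric.sphere (0:ℂ) 1 := by
    ext w; simp [Metric.mem_sphere, Complex.dist_eq]
  have hcont : Continuous fun w : ℂ => ‖P.eval w‖ :=
    continuous_norm.comp P.continuous
  have hcompact : IsCompact S := by
    rw [hSdef, hset]
    exact (isCompact_sphere (0:ℂ) 1).image hcont
  have hbdd : BddAbove S := hcompact.bddAbove
  have hMle : ∀ w : ℂ, ‖w‖ = 1 → ‖P.eval w‖ ≤ M :=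
    fun w hw => le_csSup hbdd ⟨w, hw, rfl⟩
  have hM0 : 0 ≤ M := le_trans (norm_nonneg _) (hMle 1 (by simp))
  by_contra hcon
  push_neg at hcon
  have hz0 : z ≠ 0 := by intro h; rw [h] at hz; simp at hz
  have hn0 : (0:ℝ) < n := by exact_mod_cast hn
  have hden : ((n:ℂ)) * z ^ (n-1) ≠ 0 := by
    apply mul_ne_zero
    · exact_mod_cast (Nat.pos_of_ne_zero (by omega)).ne'
    · exact pow_ne_zero _ hz0
  have habs_den : ‖(n:ℂ) * z ^ (n-1)‖ = (n:ℝ) := by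
    rw [norm_mul, norm_pow, hz, one_pow, mul_one, Complex.norm_natCast]
  set lam : ℂ := P.derivative.eval z / ((n:ℂ) * z ^ (n-1)) with hlamdef
  have hlam : M < ‖lam‖ := by
    rw [hlamdef, norm_div, habs_den, lt_div_iff₀ hn0]
    linarith [hcon]
  have hlam0 : lam ≠ 0 := by
    intro h
    rw [h, norm_zero] at hlam
    linarith
  set Q : Polynomial ℂ := C lam * X ^ n - P with hQdef
  have hQeval : ∀ u : ℂ, Q.eval u = lam * u ^ n - P.eval u := by
    intro u; simp [hQdef]
  have hQne : ∀ u : ℂ, 1 ≤ ‖u‖ → Q.eval u ≠ 0 := by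
    intro u hu h0
    rw [hQeval, sub_eq_zero] at h0
    have h1 : ‖P.eval u‖ ≤ M * ‖u‖ ^ n :=
      abs_eval_le_pow (le_of_eq hP) hMle u hu
    have h2 : ‖lam * u ^ n‖ = ‖lam‖ * ‖u‖ ^ n := by
      rw [norm_mul, norm_pow]
    have hA : (1:ℝ) ≤ ‖u‖ ^ n := one_le_pow₀ hu
    rw [← h0, h2] at h1
    nlinarith
  have hQ0 : Q ≠ 0 := by
    intro h
    exact hQne 1 (by simp) (by rw [h]; simp)
  have hroots : ∀ r ∈ Q.roots, ‖r‖ < 1 := by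
    intro r hr
    by_contra hge
    push_neg at hge
    exact hQne r hge (isRoot_of_mem_roots hr)
  have hQderiv : Q.derivative = C lam * (C (n:ℂ) * X ^ (n-1)) - P.derivative := by
    rw [hQdef, derivative_sub, derivative_C_mul, derivative_X_pow]
  have hQ'z : Q.derivative.eval z = 0 := by
    rw [hQderiv]
    simp only [eval_sub, eval_mul, eval_C, eval_pow, eval_X, hlamdef]
    have hnC : (n:ℂ) ≠ 0 := by exact_mod_cast (show n ≠ 0 by omega)
    field_simp
    simp
  have hfact : Q = C Q.leadingCoeff * (Q.roots.map fun r => X - C r).prod :=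
    (IsAlgClosed.splits Q).eq_prod_roots
  have hc0 : Q.leadingCoeff ≠ 0 := leadingCoeff_ne_zero.2 hQ0
  by_cases hrz : Q.roots = 0
  · -- constant case: Q = C c, P = C lam * X^n - C c
    rw [hrz] at hfact
    simp only [Multiset.map_zero, Multiset.prod_zero, mul_one] at hfact
    set c := Q.leadingCoeff with hcdef
    have hPform : P = C lam * X ^ n - C c := by
      have h : C lam * X ^ n - P = C c := by rw [← hfact, hQdef]
      rw [← h]; ring
    by_cases hc : c = 0
    · have h1 : ‖P.eval 1‖ = ‖lam‖ := by
        rw [hPform]; simp [hc]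
      have := hMle 1 (by simp)
      rw [h1] at this
      linarith
    · have hcabs : 0 < ‖c‖ := norm_pos_iff.2 hc
      have hlabs : 0 < ‖lam‖ := norm_pos_iff.2 hlam0
      set u : ℂ := -(((‖lam‖ : ℝ) : ℂ) / ((‖c‖ : ℝ) : ℂ)) * c / lam with hudef
      have hu0 : u ≠ 0 := by
        rw [hudef]
        apply div_ne_zero _ hlam0
        apply mul_ne_zero _ hc
        simp only [neg_ne_zero]
        apply div_ne_zero <;> simp [Complex.ofReal_ne_zero, hcabs.ne', hlabs.ne']
      have huabs : ‖u‖ = 1 := by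
        rw [hudef, norm_div, norm_mul, norm_neg, norm_div, Complex.norm_real, Real.norm_eq_abs,
          Complex.norm_real, Real.norm_eq_abs, abs_of_pos hlabs, abs_of_pos hcabs]
        field_simp
      set z₁ : ℂ := Complex.exp (Complex.log u / (n:ℂ)) with hz₁def
      have hz₁abs : ‖z₁‖ = 1 := by
        rw [hz₁def, Complex.norm_exp]
        have : (Complex.log u / (n:ℂ)).re = (Complex.log u).re / (n:ℝ) := by
          rw [show ((n:ℂ)) = ((n:ℝ):ℂ) by push_cast; rfl, Complex.div_ofReal_re]
        rw [this, Complex.log_re, huabs, Real.log_one, zero_div, Real.exp_zero]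
      have hz₁n : z₁ ^ n = u := by
        rw [hz₁def, ← Complex.exp_nat_mul]
        have hne : ((n:ℂ)) ≠ 0 := by exact_mod_cast (Nat.pos_of_ne_zero (by omega)).ne'
        rw [mul_div_cancel₀ _ hne, Complex.exp_log hu0]
      have hPz₁ : P.eval z₁ = -((((‖lam‖ : ℝ) : ℂ) / ((‖c‖ : ℝ) : ℂ)) + 1) * c := by
        have hlamu : lam * u = -(((‖lam‖ : ℝ) : ℂ) / ((‖c‖ : ℝ) : ℂ)) * c := by
          rw [hudef, mul_div_assoc']
          exact mul_div_cancel_left₀ _ hlam0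
        rw [hPform]
        simp only [eval_sub, eval_mul, eval_C, eval_pow, eval_X, hz₁n]
        rw [hlamu]
        ring
      have habsPz₁ : ‖P.eval z₁‖ = ‖lam‖ + ‖c‖ := by
        rw [hPz₁, norm_mul, norm_neg]
        have : (((‖lam‖ : ℝ) : ℂ) / ((‖c‖ : ℝ) : ℂ)) + 1
            = (((‖lam‖ / ‖c‖ + 1 : ℝ)) : ℂ) := by push_cast; ring
        rw [this, Complex.norm_real, Real.norm_eq_abs, abs_of_pos (by positivity)]
        field_simp
      have := hMle z₁ hz₁abs
      rw [habsPz₁] at this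
      linarith
  · -- nonconstant case: Gauss–Lucas contradiction
    have hQder : Q.derivative = C Q.leadingCoeff *
        Polynomial.derivative (Q.roots.map fun r => X - C r).prod := by
      conv_lhs => rw [hfact]
      rw [derivative_C_mul]
    have hprodz : (Polynomial.derivative (Q.roots.map fun r => X - C r).prod).eval z = 0 := by
      have := hQ'z
      rw [hQder] at this
      simp only [eval_mul, eval_C] at this
      exact (mul_eq_zero.1 this).resolve_left hc0
    have hpos := gl_pos (w := z) (by rw [hz]) Q.roots hrz hroots
    rw [hprodz] at hpos
    simp at hpos
end

section
/- If P is a complex polynomial of degree n and p ≥ 1, then ((1/2π)∫₀^{2π} |P'(e^{iθ})|^p dθ)^{1/p} ≤ n · ((1/2π)∫₀^{2π} |P(e^{iθ})|^p dθ)^{1/p}. -/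
open Polynomial Real MeasureTheory intervalIntegral

noncomputable def Zyg.S (n : ℕ) (t : ℝ) : ℂ :=
  ∑ a ∈ Finset.range n, Complex.exp ((a : ℂ) * t * Complex.I)

noncomputable def Zyg.K (n : ℕ) (t : ℝ) : ℂ :=
  Complex.exp ((n : ℂ) * t * Complex.I) * Zyg.S n t * (starRingEnd ℂ) (Zyg.S n t)

namespace Zyg

lemma contS (n : ℕ) : Continuous (S n) := by
  unfold S; exact continuous_finset_sum _ fun a _ => by fun_prop

lemma contK (n : ℕ) : Continuous (K n) := by
  unfold K
  have h := contS n
  exact ((Complex.continuous_exp.comp (by fun_prop)).mul h).mul (Complex.continuous_conj.comp h)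

lemma orth (m : ℤ) :
    ∫ t in (0:ℝ)..(2*π), Complex.exp ((m : ℂ) * t * Complex.I)
      = if m = 0 then (2*π : ℂ) else 0 := by
  rcases eq_or_ne m 0 with h | h
  · simp [h, Complex.ofReal_mul]
  · have hc : (m : ℂ) * Complex.I ≠ 0 := by
      simp [Complex.I_ne_zero, Complex.ext_iff]
      exact_mod_cast h
    have := integral_exp_mul_complex (a := 0) (b := 2*π) hc
    have heq : ∀ t : ℝ, (m : ℂ) * t * Complex.I = (m : ℂ) * Complex.I * t := by
      intro t; ring
    simp only [heq] at *
    rw [this]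
    have : Complex.exp ((m : ℂ) * Complex.I * (2*π : ℝ)) = 1 := by
      rw [show ((m : ℂ) * Complex.I * (2*π : ℝ)) = (m : ℂ) * (2*π*Complex.I) by push_cast; ring]
      exact Complex.exp_int_mul_two_pi_mul_I m
    rw [this]
    simp [h]

lemma conjS (n : ℕ) (t : ℝ) :
    (starRingEnd ℂ) (S n t) = ∑ b ∈ Finset.range n, Complex.exp (-(b:ℂ) * t * Complex.I) := by
  unfold S
  rw [map_sum]
  refine Finset.sum_congr rfl fun b _ => ?_
  rw [← Complex.exp_conj]
  congr 1
  simp [map_mul, Complex.conj_I, Complex.conj_ofReal]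

lemma key (n k : ℕ) (hk : k ≤ n) :
    ∫ t in (0:ℝ)..(2*π), Complex.exp (-(k:ℂ) * t * Complex.I) * K n t = 2*π*k := by
  have hpt : ∀ t : ℝ, Complex.exp (-(k:ℂ) * t * Complex.I) * K n t
      = ∑ a ∈ Finset.range n, ∑ b ∈ Finset.range n,
          Complex.exp ((((n:ℤ) + a - k - b : ℤ) : ℂ) * t * Complex.I) := by
    intro t
    unfold K
    rw [conjS]
    unfold S
    simp only [Finset.mul_sum, Finset.sum_mul]
    rw [Finset.sum_comm]
    refine Finset.sum_congr rfl fun a _ => Finset.sum_congr rfl fun b _ => ?_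
    rw [← Complex.exp_add, ← Complex.exp_add, ← Complex.exp_add]
    congr 1
    push_cast
    ring
  simp only [hpt]
  rw [intervalIntegral.integral_finset_sum]
  swap
  · exact fun a _ => (Continuous.intervalIntegrable (by
      exact continuous_finset_sum _ fun b _ => Complex.continuous_exp.comp (by fun_prop)) _ _)
  have : ∀ a ∈ Finset.range n,
      (∫ t in (0:ℝ)..(2*π), ∑ b ∈ Finset.range n,
        Complex.exp ((((n:ℤ) + a - k - b : ℤ) : ℂ) * t * Complex.I))
      = ∑ b ∈ Finset.range n,
          (if ((n:ℤ) + a - k - b : ℤ) = 0 then (2*π:ℂ) else 0) := by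
    intro a _
    rw [intervalIntegral.integral_finset_sum]
    · exact Finset.sum_congr rfl fun b _ => orth _
    · exact fun b _ => Continuous.intervalIntegrable
        (Complex.continuous_exp.comp (by fun_prop)) _ _
  rw [Finset.sum_congr rfl this]
  have hcond : ∀ a b : ℕ, (((n:ℤ) + a - k - b = 0)) ↔ (b = a + (n - k)) := by
    intro a b; omega
  have : ∀ a ∈ Finset.range n,
      (∑ b ∈ Finset.range n, if ((n:ℤ) + a - k - b : ℤ) = 0 then (2*π:ℂ) else 0)
      = if a ∈ Finset.range k then (2*π:ℂ) else 0 := by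
    intro a ha
    rw [Finset.sum_congr rfl fun b _ => if_congr (hcond a b) rfl rfl]
    rw [Finset.sum_ite_eq' (Finset.range n) (a + (n - k)) (fun _ => (2*π:ℂ))]
    refine if_congr ?_ rfl rfl
    simp only [Finset.mem_range]
    omega
  rw [Finset.sum_congr rfl this, Finset.sum_ite_mem,
    Finset.inter_eq_right.mpr (Finset.range_subset_range.mpr hk), Finset.sum_const,
    Finset.card_range, nsmul_eq_mul]
  ring

lemma zderiv (Pq : ℂ[X]) (n : ℕ) (hn : Pq.natDegree ≤ n) (z : ℂ) :
    z * Pq.derivative.eval z = ∑ k ∈ Finset.range (n+1), (k : ℂ) * Pq.coeff k * z ^ k := by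
  conv_lhs => rw [Pq.as_sum_range' (n+1) (Nat.lt_succ_of_le hn)]
  rw [map_sum, Polynomial.eval_finset_sum, Finset.mul_sum]
  refine Finset.sum_congr rfl fun k _ => ?_
  rw [Polynomial.derivative_monomial, Polynomial.eval_monomial]
  cases k with
  | zero => simp
  | succ m =>
    push_cast
    simp only [Nat.add_sub_cancel, pow_succ]
    ring

lemma main_id (n : ℕ) (Pq : ℂ[X]) (hn : Pq.natDegree ≤ n) (θ : ℝ) :
    ∫ t in (0:ℝ)..(2*π), Pq.eval (Complex.exp ((↑(θ - t)) * Complex.I)) * K n t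
      = 2*π * (Complex.exp ((θ:ℂ) * Complex.I)
          * Pq.derivative.eval (Complex.exp ((θ:ℂ) * Complex.I))) := by
  have hev : ∀ t : ℝ, Pq.eval (Complex.exp ((↑(θ - t)) * Complex.I))
      = ∑ k ∈ Finset.range (n+1), Pq.coeff k * (Complex.exp ((θ:ℂ) * Complex.I)) ^ k
          * Complex.exp (-(k:ℂ) * t * Complex.I) := by
    intro t
    rw [Polynomial.eval_eq_sum_range' (Nat.lt_succ_of_le hn)]
    refine Finset.sum_congr rfl fun k _ => ?_
    rw [← Complex.exp_nat_mul, ← Complex.exp_nat_mul, mul_assoc, ← Complex.exp_add]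
    congr 1
    push_cast
    ring
  simp only [hev, Finset.sum_mul]
  rw [intervalIntegral.integral_finset_sum]
  swap
  · intro k _
    refine Continuous.intervalIntegrable ?_ _ _
    have h1 := contK n
    exact (continuous_const.mul (Complex.continuous_exp.comp (by fun_prop))).mul h1
  have : ∀ k ∈ Finset.range (n+1),
      (∫ t in (0:ℝ)..(2*π), Pq.coeff k * (Complex.exp ((θ:ℂ) * Complex.I)) ^ k
          * Complex.exp (-(k:ℂ) * t * Complex.I) * K n t)
      = Pq.coeff k * (Complex.exp ((θ:ℂ) * Complex.I)) ^ k * (2*π*k) := by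
    intro k hk
    have : ∀ t : ℝ, Pq.coeff k * (Complex.exp ((θ:ℂ) * Complex.I)) ^ k
          * Complex.exp (-(k:ℂ) * t * Complex.I) * K n t
        = Pq.coeff k * (Complex.exp ((θ:ℂ) * Complex.I)) ^ k
          * (Complex.exp (-(k:ℂ) * t * Complex.I) * K n t) := fun t => by ring
    simp only [this]
    rw [intervalIntegral.integral_const_mul, key n k (Nat.lt_succ_iff.mp (Finset.mem_range.mp hk))]
  rw [Finset.sum_congr rfl this, zderiv Pq n hn, Finset.mul_sum]
  exact Finset.sum_congr rfl fun k _ => by ring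

noncomputable def w (n : ℕ) (t : ℝ) : ℝ := ‖S n t‖ ^ 2

lemma w_nonneg (n : ℕ) (t : ℝ) : 0 ≤ w n t := by unfold w; positivity

lemma contw (n : ℕ) : Continuous (w n) :=
  (continuous_norm.comp (contS n)).pow 2

lemma absK (n : ℕ) (t : ℝ) : ‖K n t‖ = w n t := by
  unfold K w
  rw [norm_mul, norm_mul, Complex.norm_conj, Complex.norm_exp]
  simp [sq]

lemma intW (n : ℕ) : ∫ t in (0:ℝ)..(2*π), w n t = 2*π*n := by
  have h := key n n le_rfl
  have hpt : ∀ t : ℝ, Complex.exp (-(n:ℂ) * t * Complex.I) * K n t = ((w n t : ℝ) : ℂ) := by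
    intro t
    unfold K w
    have : Complex.exp (-(n:ℂ) * t * Complex.I)
        * (Complex.exp ((n:ℂ) * t * Complex.I) * S n t * (starRingEnd ℂ) (S n t))
        = (Complex.exp (-(n:ℂ) * t * Complex.I) * Complex.exp ((n:ℂ) * t * Complex.I))
          * (S n t * (starRingEnd ℂ) (S n t)) := by ring
    rw [this, ← Complex.exp_add, show -(n:ℂ) * t * Complex.I + (n:ℂ) * t * Complex.I = 0 by ring,
      Complex.exp_zero, one_mul, Complex.mul_conj]
    rw [Complex.normSq_eq_norm_sq]
  simp only [hpt] at h
  rw [intervalIntegral.integral_ofReal] at h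
  exact_mod_cast h

lemma pointwise (n : ℕ) (Pq : ℂ[X]) (hn : Pq.natDegree ≤ n) (θ : ℝ) :
    2*π * ‖Pq.derivative.eval (Complex.exp ((θ:ℂ) * Complex.I))‖
      ≤ ∫ t in (0:ℝ)..(2*π),
          ‖Pq.eval (Complex.exp ((↑(θ - t)) * Complex.I))‖ * w n t := by
  have h := main_id n Pq hn θ
  have h2π : (0:ℝ) ≤ 2*π := by positivity
  have habs : ‖2*π * (Complex.exp ((θ:ℂ) * Complex.I)
      * Pq.derivative.eval (Complex.exp ((θ:ℂ) * Complex.I)))‖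
      = 2*π * ‖Pq.derivative.eval (Complex.exp ((θ:ℂ) * Complex.I))‖ := by
    simp only [norm_mul, Complex.norm_exp, Complex.norm_real, Complex.norm_two,
      abs_of_nonneg pi_pos.le]
    simp [Complex.mul_re, pi_pos.le]
  calc 2*π * ‖Pq.derivative.eval (Complex.exp ((θ:ℂ) * Complex.I))‖
      = ‖∫ t in (0:ℝ)..(2*π),
          Pq.eval (Complex.exp ((↑(θ - t)) * Complex.I)) * K n t‖ := by rw [h, habs]
    _ ≤ ∫ t in (0:ℝ)..(2*π),
          ‖Pq.eval (Complex.exp ((↑(θ - t)) * Complex.I)) * K n t‖ := by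
        refine (intervalIntegral.norm_integral_le_integral_norm h2π).trans_eq ?_
        simp
    _ = ∫ t in (0:ℝ)..(2*π),
          ‖Pq.eval (Complex.exp ((↑(θ - t)) * Complex.I))‖ * w n t := by
        refine intervalIntegral.integral_congr fun t _ => ?_
        rw [norm_mul, absK]

lemma finMeas : IsFiniteMeasure (MeasureTheory.volume.restrict (Set.Ioc (0:ℝ) (2*π))) :=
  ⟨by rw [Measure.restrict_apply_univ]; exact measure_Ioc_lt_top⟩

lemma memLp_cont (g : ℝ → ℝ) (hg : Continuous g) (r : ENNReal) :
    MemLp g r (MeasureTheory.volume.restrict (Set.Ioc (0:ℝ) (2*π))) := by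
  haveI := finMeas
  obtain ⟨C, hC⟩ := (isCompact_Icc (a := (0:ℝ)) (b := 2*π)).exists_bound_of_continuousOn
    hg.continuousOn
  refine MemLp.of_bound hg.aestronglyMeasurable C ?_
  filter_upwards [MeasureTheory.ae_restrict_mem measurableSet_Ioc] with t ht
  exact hC t (Set.Ioc_subset_Icc_self ht)

lemma hoelder (f g : ℝ → ℝ) (hf : Continuous f) (hg : Continuous g)
    (hf0 : ∀ t, 0 ≤ f t) (hg0 : ∀ t, 0 ≤ g t) {p : ℝ} (hp : 1 ≤ p) :
    (∫ t in (0:ℝ)..(2*π), f t * g t) ^ p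
      ≤ (∫ t in (0:ℝ)..(2*π), f t ^ p * g t) * (∫ t in (0:ℝ)..(2*π), g t) ^ (p - 1) := by
  have h2π : (0:ℝ) ≤ 2*π := by positivity
  rcases eq_or_lt_of_le hp with h1 | h1
  · simp only [← h1, Real.rpow_one, sub_self, Real.rpow_zero, mul_one, le_refl]
  have hp0 : (0:ℝ) < p := lt_trans one_pos h1
  set q : ℝ := p / (p - 1) with hq
  have hpq : p.HolderConjugate q := (Real.holderConjugate_iff_eq_conjExponent h1).2 rfl
  set μ := MeasureTheory.volume.restrict (Set.Ioc (0:ℝ) (2*π)) with hμ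
  haveI := finMeas
  have hgrp : Continuous fun t => g t ^ (1/p) :=
    hg.rpow_const fun t => Or.inr (by positivity)
  have hgrq : Continuous fun t => g t ^ (1/q) :=
    hg.rpow_const fun t => Or.inr (one_div_nonneg.mpr hpq.symm.nonneg)
  have hFG : ∀ t, f t * g t = (f t * g t ^ (1/p)) * g t ^ (1/q) := by
    intro t
    rcases eq_or_lt_of_le (hg0 t) with h0 | h0
    · rw [← h0, Real.zero_rpow (by positivity : (1:ℝ)/p ≠ 0),
        Real.zero_rpow (one_div_ne_zero hpq.symm.pos.ne')]
      simp
    · rw [mul_assoc, ← Real.rpow_add h0]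
      rw [show 1/p + 1/q = 1 by rw [one_div, one_div]; exact hpq.inv_add_inv_eq_one, Real.rpow_one]
  have hH := MeasureTheory.integral_mul_le_Lp_mul_Lq_of_nonneg (μ := μ) hpq
    (f := fun t => f t * g t ^ (1/p)) (g := fun t => g t ^ (1/q))
    (Filter.Eventually.of_forall fun t => mul_nonneg (hf0 t) (Real.rpow_nonneg (hg0 t) _))
    (Filter.Eventually.of_forall fun t => Real.rpow_nonneg (hg0 t) _)
    (by simpa using memLp_cont (fun t => f t * g t ^ (1/p)) (hf.mul hgrp) _)
    (by simpa using memLp_cont _ hgrq _)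
  have hfp : ∀ t, (f t * g t ^ (1/p)) ^ p = f t ^ p * g t := by
    intro t
    rw [Real.mul_rpow (hf0 t) (Real.rpow_nonneg (hg0 t) _), ← Real.rpow_mul (hg0 t),
      one_div_mul_cancel hp0.ne', Real.rpow_one]
  have hgq : ∀ t, (g t ^ (1/q)) ^ q = g t := by
    intro t
    rw [← Real.rpow_mul (hg0 t), one_div_mul_cancel hpq.symm.pos.ne', Real.rpow_one]
  simp only [hfp, hgq] at hH
  have hint : ∀ h : ℝ → ℝ, (∫ t in (0:ℝ)..(2*π), h t) = ∫ t, h t ∂μ := by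
    intro h; rw [intervalIntegral.integral_of_le h2π]
  have hA0 : 0 ≤ ∫ t, f t ^ p * g t ∂μ :=
    MeasureTheory.integral_nonneg fun t => mul_nonneg (Real.rpow_nonneg (hf0 t) _) (hg0 t)
  have hB0 : 0 ≤ ∫ t, g t ∂μ := MeasureTheory.integral_nonneg hg0
  have hfg0 : 0 ≤ ∫ t, f t * g t ∂μ :=
    MeasureTheory.integral_nonneg fun t => mul_nonneg (hf0 t) (hg0 t)
  rw [hint, hint, hint]
  calc (∫ t, f t * g t ∂μ) ^ p
      ≤ ((∫ t, f t ^ p * g t ∂μ) ^ (1/p) * (∫ t, g t ∂μ) ^ (1/q)) ^ p := by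
        refine Real.rpow_le_rpow hfg0 ?_ hp0.le
        calc (∫ t, f t * g t ∂μ)
            = ∫ t, (f t * g t ^ (1/p)) * g t ^ (1/q) ∂μ := by
              exact MeasureTheory.integral_congr_ae (Filter.Eventually.of_forall hFG)
          _ ≤ _ := hH
    _ = (∫ t, f t ^ p * g t ∂μ) * (∫ t, g t ∂μ) ^ (p - 1) := by
        rw [Real.mul_rpow (Real.rpow_nonneg hA0 _) (Real.rpow_nonneg hB0 _),
          ← Real.rpow_mul hA0, ← Real.rpow_mul hB0,
          one_div_mul_cancel hp0.ne', Real.rpow_one]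
        congr 2
        rw [hq]
        field_simp

lemma exp_periodic (x : ℝ) :
    Complex.exp ((↑(x + 2*π)) * Complex.I) = Complex.exp ((x:ℂ) * Complex.I) := by
  push_cast
  rw [add_mul, Complex.exp_add, Complex.exp_two_pi_mul_I, mul_one]

lemma trans_int (Pq : Polynomial ℂ) (p t : ℝ) :
    (∫ θ in (0:ℝ)..(2*π),
        ‖Pq.eval (Complex.exp ((↑(θ - t)) * Complex.I))‖ ^ p)
      = ∫ θ in (0:ℝ)..(2*π), ‖Pq.eval (Complex.exp ((θ:ℂ) * Complex.I))‖ ^ p := by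
  have hper : Function.Periodic
      (fun θ : ℝ => ‖Pq.eval (Complex.exp ((θ:ℂ) * Complex.I))‖ ^ p) (2*π) := by
    intro x
    simp only [exp_periodic]
  have h := intervalIntegral.integral_comp_sub_right (a := (0:ℝ)) (b := 2*π)
    (fun θ : ℝ => ‖Pq.eval (Complex.exp ((θ:ℂ) * Complex.I))‖ ^ p) t
  rw [h, show (0:ℝ) - t = -t by ring, show 2*π - t = -t + 2*π by ring,
    hper.intervalIntegral_add_eq (-t) 0, zero_add]

set_option maxHeartbeats 1000000 in
lemma core (n : ℕ) (hn : 0 < n) (Pq : Polynomial ℂ) (hd : Pq.natDegree ≤ n)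
    {p : ℝ} (hp : 1 ≤ p) :
    (∫ θ in (0:ℝ)..(2*π),
        ‖Pq.derivative.eval (Complex.exp ((θ:ℂ) * Complex.I))‖ ^ p)
      ≤ (n:ℝ) ^ p * ∫ θ in (0:ℝ)..(2*π),
          ‖Pq.eval (Complex.exp ((θ:ℂ) * Complex.I))‖ ^ p := by
  have h2π : (0:ℝ) ≤ 2*π := by positivity
  have h2π' : (0:ℝ) < 2*π := by positivity
  have hp0 : (0:ℝ) < p := lt_of_lt_of_le one_pos hp
  set μ := MeasureTheory.volume.restrict (Set.Ioc (0:ℝ) (2*π)) with hμ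
  set c : ℝ := (1/(2*π)) ^ p * (2*π*(n:ℝ)) ^ (p - 1) with hc
  set B : ℝ := ∫ θ in (0:ℝ)..(2*π),
      ‖Pq.eval (Complex.exp ((θ:ℂ) * Complex.I))‖ ^ p with hB
  -- continuity facts
  have hcent : ∀ s : ℝ → ℝ, Continuous s → Continuous fun θ : ℝ =>
      ‖Pq.eval (Complex.exp ((↑(s θ)) * Complex.I))‖ := by
    intro s hs
    exact continuous_norm.comp (Pq.continuous.comp
      (Complex.continuous_exp.comp (by fun_prop)))
  have hF : Continuous fun q : ℝ × ℝ =>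
      ‖Pq.eval (Complex.exp ((↑(q.1 - q.2)) * Complex.I))‖ ^ p := by
    refine Continuous.rpow_const ?_ fun _ => Or.inr hp0.le
    exact continuous_norm.comp (Pq.continuous.comp
      (Complex.continuous_exp.comp (by fun_prop)))
  have hFw : Continuous fun q : ℝ × ℝ =>
      ‖Pq.eval (Complex.exp ((↑(q.1 - q.2)) * Complex.I))‖ ^ p * w n q.2 :=
    hF.mul ((contw n).comp continuous_snd)
  -- pointwise bound
  have hpw : ∀ θ : ℝ,
      ‖Pq.derivative.eval (Complex.exp ((θ:ℂ) * Complex.I))‖ ^ p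
        ≤ c * ∫ t in (0:ℝ)..(2*π),
            ‖Pq.eval (Complex.exp ((↑(θ - t)) * Complex.I))‖ ^ p * w n t := by
    intro θ
    have h1 := pointwise n Pq hd θ
    have hfwint : (0:ℝ) ≤ ∫ t in (0:ℝ)..(2*π),
        ‖Pq.eval (Complex.exp ((↑(θ - t)) * Complex.I))‖ * w n t :=
      intervalIntegral.integral_nonneg h2π fun t _ =>
        mul_nonneg (norm_nonneg _) (w_nonneg n t)
    have hb : ‖Pq.derivative.eval (Complex.exp ((θ:ℂ) * Complex.I))‖
        ≤ (1/(2*π)) * ∫ t in (0:ℝ)..(2*π),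
            ‖Pq.eval (Complex.exp ((↑(θ - t)) * Complex.I))‖ * w n t := by
      have h1' := (le_div_iff₀' h2π').mpr h1
      rw [one_div, inv_mul_eq_div]
      exact h1'
    have h5 := hoelder (fun t => ‖Pq.eval (Complex.exp ((↑(θ - t)) * Complex.I))‖)
      (w n) (hcent (fun t => θ - t) (by fun_prop)) (contw n) (fun t => norm_nonneg _)
      (fun t => w_nonneg n t) hp
    rw [intW] at h5
    calc ‖Pq.derivative.eval (Complex.exp ((θ:ℂ) * Complex.I))‖ ^ p
        ≤ ((1/(2*π)) * ∫ t in (0:ℝ)..(2*π),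
            ‖Pq.eval (Complex.exp ((↑(θ - t)) * Complex.I))‖ * w n t) ^ p :=
          Real.rpow_le_rpow (norm_nonneg _) hb hp0.le
      _ = (1/(2*π)) ^ p * (∫ t in (0:ℝ)..(2*π),
            ‖Pq.eval (Complex.exp ((↑(θ - t)) * Complex.I))‖ * w n t) ^ p :=
          Real.mul_rpow (by positivity) hfwint
      _ ≤ (1/(2*π)) ^ p * ((∫ t in (0:ℝ)..(2*π),
            ‖Pq.eval (Complex.exp ((↑(θ - t)) * Complex.I))‖ ^ p * w n t)
              * (2*π*(n:ℝ)) ^ (p - 1)) :=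
          mul_le_mul_of_nonneg_left h5 (by positivity)
      _ = c * ∫ t in (0:ℝ)..(2*π),
            ‖Pq.eval (Complex.exp ((↑(θ - t)) * Complex.I))‖ ^ p * w n t := by
          rw [hc]; ring
  -- integrability of the product function
  have hFint : MeasureTheory.Integrable
      (fun q : ℝ × ℝ =>
        ‖Pq.eval (Complex.exp ((↑(q.1 - q.2)) * Complex.I))‖ ^ p * w n q.2)
      (μ.prod μ) := by
    rw [hμ, MeasureTheory.Measure.prod_restrict, ← MeasureTheory.Measure.volume_eq_prod]
    exact (hFw.continuousOn.integrableOn_compact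
      (isCompact_Icc.prod isCompact_Icc)).mono_set
      (Set.prod_mono Set.Ioc_subset_Icc_self Set.Ioc_subset_Icc_self)
  have hGint : MeasureTheory.Integrable
      (fun θ : ℝ => ∫ t,
        ‖Pq.eval (Complex.exp ((↑(θ - t)) * Complex.I))‖ ^ p * w n t ∂μ) μ :=
    hFint.integral_prod_left
  have hGiv : ∀ θ : ℝ, (∫ t in (0:ℝ)..(2*π),
      ‖Pq.eval (Complex.exp ((↑(θ - t)) * Complex.I))‖ ^ p * w n t)
      = ∫ t, ‖Pq.eval (Complex.exp ((↑(θ - t)) * Complex.I))‖ ^ p * w n t ∂μ := by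
    intro θ; rw [intervalIntegral.integral_of_le h2π, hμ]
  -- integrate the pointwise bound
  have hmono : (∫ θ in (0:ℝ)..(2*π),
      ‖Pq.derivative.eval (Complex.exp ((θ:ℂ) * Complex.I))‖ ^ p)
      ≤ ∫ θ in (0:ℝ)..(2*π), c * ∫ t in (0:ℝ)..(2*π),
          ‖Pq.eval (Complex.exp ((↑(θ - t)) * Complex.I))‖ ^ p * w n t := by
    refine intervalIntegral.integral_mono_on h2π ?_ ?_ fun θ _ => hpw θ
    · refine Continuous.intervalIntegrable ?_ _ _
      refine Continuous.rpow_const ?_ fun _ => Or.inr hp0.le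
      exact continuous_norm.comp (Pq.derivative.continuous.comp
        (Complex.continuous_exp.comp (by fun_prop)))
    · have : (fun θ : ℝ => c * ∫ t in (0:ℝ)..(2*π),
          ‖Pq.eval (Complex.exp ((↑(θ - t)) * Complex.I))‖ ^ p * w n t)
          = fun θ : ℝ => c * ∫ t,
            ‖Pq.eval (Complex.exp ((↑(θ - t)) * Complex.I))‖ ^ p * w n t ∂μ := by
        funext θ; rw [hGiv]
      rw [this]
      exact (intervalIntegrable_iff_integrableOn_Ioc_of_le h2π).mpr (hGint.const_mul c)
  -- Fubini and translation invariance
  have hswap : (∫ θ, (∫ t,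
      ‖Pq.eval (Complex.exp ((↑(θ - t)) * Complex.I))‖ ^ p * w n t ∂μ) ∂μ)
      = ∫ t, (∫ θ,
        ‖Pq.eval (Complex.exp ((↑(θ - t)) * Complex.I))‖ ^ p * w n t ∂μ) ∂μ :=
    MeasureTheory.integral_integral_swap hFint
  have hinner : ∀ t : ℝ, (∫ θ,
      ‖Pq.eval (Complex.exp ((↑(θ - t)) * Complex.I))‖ ^ p * w n t ∂μ)
      = B * w n t := by
    intro t
    rw [MeasureTheory.integral_mul_const]
    congr 1
    rw [hB, ← trans_int Pq p t, intervalIntegral.integral_of_le h2π, hμ]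
  have htotal : (∫ θ, (∫ t,
      ‖Pq.eval (Complex.exp ((↑(θ - t)) * Complex.I))‖ ^ p * w n t ∂μ) ∂μ)
      = B * (2*π*(n:ℝ)) := by
    rw [hswap]
    have : ∀ t : ℝ, True := fun _ => trivial
    calc (∫ t, (∫ θ,
        ‖Pq.eval (Complex.exp ((↑(θ - t)) * Complex.I))‖ ^ p * w n t ∂μ) ∂μ)
        = ∫ t, B * w n t ∂μ := MeasureTheory.integral_congr_ae
          (Filter.Eventually.of_forall hinner)
      _ = B * ∫ t, w n t ∂μ := MeasureTheory.integral_const_mul B _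
      _ = B * (2*π*(n:ℝ)) := by
          rw [hμ, ← intervalIntegral.integral_of_le h2π, intW]
  -- put everything together
  have hchain : (∫ θ in (0:ℝ)..(2*π),
      ‖Pq.derivative.eval (Complex.exp ((θ:ℂ) * Complex.I))‖ ^ p)
      ≤ c * (B * (2*π*(n:ℝ))) := by
    refine hmono.trans_eq ?_
    rw [intervalIntegral.integral_of_le h2π]
    simp only [hGiv]
    rw [← hμ, MeasureTheory.integral_const_mul c, htotal]
  refine hchain.trans_eq ?_
  have hx : (0:ℝ) < 2*π*(n:ℝ) := by
    have : (0:ℝ) < (n:ℝ) := by exact_mod_cast hn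
    positivity
  rw [hc]
  have h1 : (2*π*(n:ℝ)) ^ (p-1) * (2*π*(n:ℝ)) = (2*π*(n:ℝ)) ^ p := by
    nth_rewrite 2 [← Real.rpow_one (2*π*(n:ℝ))]
    rw [← Real.rpow_add hx, sub_add_cancel]
  have h2 : (1/(2*π)) ^ p * (2*π*(n:ℝ)) ^ p = (n:ℝ) ^ p := by
    rw [← Real.mul_rpow (by positivity) hx.le]
    congr 1
    field_simp
  calc (1/(2*π)) ^ p * (2*π*(n:ℝ)) ^ (p-1) * (B * (2*π*(n:ℝ)))
      = (1/(2*π)) ^ p * ((2*π*(n:ℝ)) ^ (p-1) * (2*π*(n:ℝ))) * B := by ring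
    _ = (n:ℝ) ^ p * B := by rw [h1, h2]

end Zyg

theorem zygmund_inequality (n : ℕ) (P : Polynomial ℂ) (hP : P.natDegree = n)
    (p : ℝ) (hp : 1 ≤ p) :
    ((1 / (2 * π)) * ∫ θ in (0:ℝ)..(2 * π),
        ‖P.derivative.eval (Complex.exp (θ * Complex.I))‖ ^ p) ^ (1 / p) ≤
      (n : ℝ) * ((1 / (2 * π)) * ∫ θ in (0:ℝ)..(2 * π),
        ‖P.eval (Complex.exp (θ * Complex.I))‖ ^ p) ^ (1 / p) := by
  have h2π : (0:ℝ) ≤ 2*π := by positivity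
  have hp0 : (0:ℝ) < p := lt_of_lt_of_le one_pos hp
  rcases Nat.eq_zero_or_pos n with hn0 | hn
  · have hPC := Polynomial.eq_C_of_natDegree_eq_zero (by rw [hP, hn0] : P.natDegree = 0)
    have hder : P.derivative = 0 := by rw [hPC]; exact Polynomial.derivative_C
    rw [hder, hn0]
    simp [Real.zero_rpow hp0.ne', Real.zero_rpow (one_div_ne_zero hp0.ne'), Real.zero_rpow (inv_ne_zero hp0.ne')]
  · have hA := Zyg.core n hn P (le_of_eq hP) hp
    have hA0 : 0 ≤ ∫ θ in (0:ℝ)..(2*π),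
        ‖P.derivative.eval (Complex.exp (θ * Complex.I))‖ ^ p :=
      intervalIntegral.integral_nonneg h2π fun θ _ =>
        Real.rpow_nonneg (norm_nonneg _) _
    have hB0 : 0 ≤ ∫ θ in (0:ℝ)..(2*π),
        ‖P.eval (Complex.exp (θ * Complex.I))‖ ^ p :=
      intervalIntegral.integral_nonneg h2π fun θ _ =>
        Real.rpow_nonneg (norm_nonneg _) _
    calc ((1 / (2 * π)) * ∫ θ in (0:ℝ)..(2 * π),
          ‖P.derivative.eval (Complex.exp (θ * Complex.I))‖ ^ p) ^ (1 / p)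
        ≤ ((1 / (2 * π)) * ((n:ℝ) ^ p * ∫ θ in (0:ℝ)..(2 * π),
            ‖P.eval (Complex.exp (θ * Complex.I))‖ ^ p)) ^ (1 / p) := by
          refine Real.rpow_le_rpow (mul_nonneg (by positivity) hA0) ?_ (by positivity)
          exact mul_le_mul_of_nonneg_left hA (by positivity)
      _ = (n : ℝ) * ((1 / (2 * π)) * ∫ θ in (0:ℝ)..(2 * π),
            ‖P.eval (Complex.exp (θ * Complex.I))‖ ^ p) ^ (1 / p) := by
          rw [show (1/(2*π)) * ((n:ℝ) ^ p * ∫ θ in (0:ℝ)..(2 * π),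
              ‖P.eval (Complex.exp (θ * Complex.I))‖ ^ p)
            = (n:ℝ) ^ p * ((1/(2*π)) * ∫ θ in (0:ℝ)..(2 * π),
              ‖P.eval (Complex.exp (θ * Complex.I))‖ ^ p) by ring,
            Real.mul_rpow (Real.rpow_nonneg (Nat.cast_nonneg n) _)
              (mul_nonneg (by positivity) hB0),
            ← Real.rpow_mul (Nat.cast_nonneg n), mul_one_div_cancel hp0.ne',
            Real.rpow_one]
end

section
/- If P is a complex polynomial of degree n, then for every complex number α with |α| > 1 and every z with |z| = 1, |D_α P(z)| ≤ n|α| · max_{|w|=1} |P(w)|. -/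
open Polynomial

private lemma key_ineq (z w : ℂ) :
    ‖z - w‖ ^ 2 - ‖(starRingEnd ℂ) z * w - 1‖ ^ 2 =
      (‖z‖ ^ 2 - 1) * (1 - ‖w‖ ^ 2) := by
  simp only [Complex.sq_norm, Complex.normSq_apply, Complex.sub_re, Complex.sub_im,
    Complex.mul_re, Complex.mul_im, Complex.conj_re, Complex.conj_im, Complex.one_re,
    Complex.one_im]
  ring

private lemma inv_shift_iff {z w : ℂ} (hz : 1 < ‖z‖) (hzw : z ≠ w) :
    ‖1 / (z - w) - (starRingEnd ℂ) z / ((‖z‖ ^ 2 - 1 : ℝ) : ℂ)‖ ≤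
        1 / (‖z‖ ^ 2 - 1) ↔
      ‖(starRingEnd ℂ) z * w - 1‖ ≤ ‖z - w‖ := by
  set s : ℝ := ‖z‖ ^ 2 - 1 with hs
  have hspos : 0 < s := by nlinarith [norm_nonneg z]
  have hne : z - w ≠ 0 := sub_ne_zero.mpr hzw
  have habs : (0:ℝ) < ‖z - w‖ := norm_pos_iff.mpr hne
  have hcz : (starRingEnd ℂ) z * z = ((‖z‖ : ℝ) : ℂ) ^ 2 := by
    rw [mul_comm, Complex.mul_conj, Complex.normSq_eq_norm_sq]
    push_cast; ring
  have hsc : ((s:ℝ):ℂ) = (starRingEnd ℂ) z * z - 1 := by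
    rw [hs]; push_cast; rw [hcz]
  have hsne : ((s:ℂ)) ≠ 0 := by
    simpa using Complex.ofReal_ne_zero.mpr (ne_of_gt hspos)
  have hrw : 1 / (z - w) - (starRingEnd ℂ) z / ((s : ℝ) : ℂ) =
      ((starRingEnd ℂ) z * w - 1) / ((s:ℂ) * (z - w)) := by
    rw [div_sub_div _ _ hne hsne, div_eq_div_iff (mul_ne_zero hne hsne) (mul_ne_zero hsne hne),
      hsc]
    ring
  rw [hrw, norm_div, norm_mul]
  rw [Complex.norm_real, Real.norm_eq_abs, abs_of_pos hspos]
  rw [div_le_div_iff₀ (by positivity) hspos, one_mul]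
  constructor
  · intro h; nlinarith
  · intro h; nlinarith

private lemma polar_sum (z α : ℂ) (s : Multiset ℂ) :
    (∀ r ∈ s, z ≠ r) →
    ((s.card : ℂ) * ((s.map fun r => X - C r).prod.eval z) +
        (α - z) * ((derivative (s.map fun r => X - C r).prod).eval z)
      = ((s.map fun r => X - C r).prod.eval z) * (s.map fun r => (α - r) / (z - r)).sum) := by
  induction s using Multiset.induction_on with
  | empty => simp
  | cons r t ih =>
    intro h
    have hzr : z - r ≠ 0 := sub_ne_zero.mpr (h r (Multiset.mem_cons_self r t))
    have iht := ih (fun x hx => h x (Multiset.mem_cons_of_mem hx))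
    simp only [Multiset.map_cons, Multiset.prod_cons, Multiset.sum_cons, Multiset.card_cons,
      derivative_mul, eval_mul, eval_add, eval_sub, eval_X, eval_C, derivative_sub,
      derivative_X, derivative_C, sub_zero, eval_one, Nat.cast_add, Nat.cast_one]
    have hc : (z - r) * ((α - r) / (z - r)) = α - r := by field_simp
    set Q := (t.map fun x => X - C x).prod
    set q := Q.eval z
    set q' := (derivative Q).eval z
    have : (z - r) * (q * ((α - r) / (z - r) + (t.map fun x => (α - x) / (z - x)).sum))
        = q * (α - r) + (z - r) * (q * (t.map fun x => (α - x) / (z - x)).sum) := by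
      field_simp
    rw [mul_assoc, this, ← iht]
    ring

private lemma laguerre {R : ℂ[X]} {n : ℕ} (hn : 0 < n) (hdeg : R.natDegree = n)
    (hroots : ∀ r ∈ R.roots, ‖r‖ ≤ 1)
    {α z : ℂ} (hα : 1 < ‖α‖) (hz : 1 < ‖z‖) (hzα : z ≠ α) :
    (n : ℂ) * R.eval z + (α - z) * R.derivative.eval z ≠ 0 := by
  have hR0 : R ≠ 0 := by
    intro h; rw [h, natDegree_zero] at hdeg; omega
  have hsplit := (IsAlgClosed.splits R).eq_prod_roots
  have hcard : R.roots.card = n := by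
    rw [← hdeg]; exact splits_iff_card_roots.mp (IsAlgClosed.splits R)
  have hzr : ∀ r ∈ R.roots, z ≠ r := by
    intro r hr h
    exact absurd (h ▸ hroots r hr) (not_le.mpr hz)
  have heval : R.eval z ≠ 0 := by
    intro h
    have : z ∈ R.roots := by
      rw [mem_roots hR0]; exact h
    exact hzr z this rfl
  set lc := R.leadingCoeff with hlc
  set Q := (R.roots.map fun r => X - C r).prod with hQ
  have hval : R.eval z = lc * Q.eval z := by
    conv_lhs => rw [hsplit]
    simp [eval_mul]
  have hder : R.derivative.eval z = lc * (derivative Q).eval z := by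
    conv_lhs => rw [hsplit, derivative_C_mul]
    simp [eval_mul]
  intro hcontra
  have hps := polar_sum z α R.roots hzr
  rw [hcard] at hps
  have hQz : lc * Q.eval z ≠ 0 := hval ▸ heval
  have hS : (R.roots.map fun r => (α - r) / (z - r)).sum = 0 := by
    have : lc * (Q.eval z * (R.roots.map fun r => (α - r) / (z - r)).sum) = 0 := by
      rw [← hps]; rw [hval, hder] at hcontra; linear_combination hcontra
    rcases mul_eq_zero.mp this with h | h
    · exact absurd (by rw [h, zero_mul] : lc * Q.eval z = 0) hQz
    · rcases mul_eq_zero.mp h with h2 | h2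
      · exact absurd (by rw [h2, mul_zero] : lc * Q.eval z = 0) hQz
      · exact h2
  -- now derive contradiction
  set s : ℝ := ‖z‖ ^ 2 - 1 with hsdef
  have hspos : 0 < s := by nlinarith [norm_nonneg z]
  set c : ℂ := (starRingEnd ℂ) z / ((s : ℝ) : ℂ) with hcdef
  set T : ℂ := (R.roots.map fun r => 1 / (z - r)).sum with hT
  -- S = n + (α - z) * T
  have hterm : ∀ r ∈ R.roots, (α - r) / (z - r) = 1 + (α - z) * (1 / (z - r)) := by
    intro r hr
    have : z - r ≠ 0 := sub_ne_zero.mpr (hzr r hr)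
    field_simp
    ring
  have hS2 : (R.roots.map fun r => (α - r) / (z - r)).sum
      = (n : ℂ) + (α - z) * T := by
    rw [Multiset.map_congr rfl hterm, Multiset.sum_map_add]
    congr 1
    · simp [Multiset.map_const', hcard]
    · rw [hT, ← Multiset.sum_map_mul_left]
  have hαz : α - z ≠ 0 := sub_ne_zero.mpr (Ne.symm hzα)
  have hTval : T = -(n : ℂ) / (α - z) := by
    rw [hS2] at hS
    rw [eq_div_iff hαz]
    linear_combination hS
  -- bound |T - n c| ≤ n / s
  have hbound : ‖T - (n : ℂ) * c‖ ≤ (n : ℝ) * (1 / s) := by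
    have hrw : T - (n : ℂ) * c = (R.roots.map fun r => 1 / (z - r) - c).sum := by
      rw [Multiset.sum_map_sub, hT]
      congr 1
      simp [Multiset.map_const', hcard, nsmul_eq_mul]
    rw [hrw]
    calc ‖(R.roots.map fun r => 1 / (z - r) - c).sum‖
        ≤ ((R.roots.map fun r => 1 / (z - r) - c).map (fun x : ℂ => ‖x‖)).sum := by
          simpa using norm_multiset_sum_le (R.roots.map fun r => 1 / (z - r) - c)
      _ ≤ _ := by
          rw [Multiset.map_map]
          have hb : ∀ x ∈ R.roots.map ((fun x : ℂ => ‖x‖) ∘ fun r => 1 / (z - r) - c), x ≤ 1 / s := by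
            intro x hx
            obtain ⟨r, hr, rfl⟩ := Multiset.mem_map.mp hx
            have h1 : ‖(starRingEnd ℂ) z * r - 1‖ ≤ ‖z - r‖ := by
              have hk := key_ineq z r
              have hr1 : ‖r‖ ≤ 1 := hroots r hr
              have h2 : (0:ℝ) ≤ (‖z‖ ^ 2 - 1) * (1 - ‖r‖ ^ 2) :=
                mul_nonneg (by nlinarith) (by nlinarith [norm_nonneg r])
              exact (pow_le_pow_iff_left₀ (norm_nonneg _) (norm_nonneg _)
                two_ne_zero).mp (by nlinarith)
            exact (inv_shift_iff hz (hzr r hr)).mpr h1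
          calc ((R.roots.map ((fun x : ℂ => ‖x‖) ∘ fun r => 1 / (z - r) - c))).sum
              ≤ (R.roots.map ((fun x : ℂ => ‖x‖) ∘ fun r => 1 / (z - r) - c)).card • (1 / s) :=
                Multiset.sum_le_card_nsmul _ _ hb
            _ = (n : ℝ) * (1 / s) := by
                rw [Multiset.card_map, hcard]; simp [nsmul_eq_mul]
  -- hence |1/(z-α) - c| ≤ 1/s
  have hn' : (0:ℝ) < n := Nat.cast_pos.mpr hn
  have hfin : ‖1 / (z - α) - c‖ ≤ 1 / s := by
    have heq : T - (n : ℂ) * c = (n : ℂ) * (1 / (z - α) - c) := by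
      rw [hTval]
      have hne : z - α ≠ 0 := sub_ne_zero.mpr hzα
      field_simp
      ring
    rw [heq, norm_mul, Complex.norm_natCast] at hbound
    exact le_of_mul_le_mul_left hbound hn'
  have hlast := (inv_shift_iff hz hzα).mp hfin
  have hk := key_ineq z α
  have hneg : (‖z‖ ^ 2 - 1) * (1 - ‖α‖ ^ 2) < 0 :=
    mul_neg_of_pos_of_neg (by nlinarith) (by nlinarith)
  nlinarith [pow_le_pow_left₀ (norm_nonneg _) hlast 2, hk, hneg]

private lemma rev_eval {P : ℂ[X]} {u : ℂ} (hu : u ≠ 0) :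
    (reverse P).eval u⁻¹ * u ^ P.natDegree = P.eval u := by
  letI : Invertible u := invertibleOfNonzero hu
  have := eval₂_reverse_mul_pow (RingHom.id ℂ) u P
  rw [invOf_eq_inv] at this
  exact this

private lemma rev_bound {P : ℂ[X]} {M : ℝ}
    (hMb : ∀ w : ℂ, ‖w‖ = 1 → ‖P.eval w‖ ≤ M) :
    ∀ v : ℂ, ‖v‖ ≤ 1 → ‖(reverse P).eval v‖ ≤ M := by
  intro v hv
  have hdiff : DiffContOnCl ℂ (fun w => (reverse P).eval w) (Metric.ball (0:ℂ) 1) :=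
    (reverse P).differentiable.diffContOnCl
  have hbd : ∀ w ∈ frontier (Metric.ball (0:ℂ) 1), ‖(reverse P).eval w‖ ≤ M := by
    intro w hw
    rw [frontier_ball (0:ℂ) one_ne_zero] at hw
    have hw1 : ‖w‖ = 1 := by
      simpa [Complex.dist_eq] using hw
    have hw0 : w ≠ 0 := by
      intro h; rw [h] at hw1; simp at hw1
    have hwi : w⁻¹ ≠ 0 := inv_ne_zero hw0
    have hkey := rev_eval (P := P) hwi
    rw [inv_inv] at hkey
    have habs : ‖(reverse P).eval w‖ * ‖w⁻¹‖ ^ P.natDegree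
        = ‖P.eval w⁻¹‖ := by
      rw [← norm_pow, ← norm_mul, hkey]
    have h1 : ‖w⁻¹‖ = 1 := by
      rw [norm_inv, hw1, inv_one]
    rw [h1, one_pow, mul_one] at habs
    rw [habs]
    exact hMb _ h1
  have := Complex.norm_le_of_forall_mem_frontier_norm_le Metric.isBounded_ball hdiff hbd
    (z := v) (by rw [closure_ball (0:ℂ) one_ne_zero]; simpa [Complex.dist_eq] using hv)
  simpa using this

private lemma grow_bound {P : ℂ[X]} {n : ℕ} (hP : P.natDegree = n) {M : ℝ}
    (hMb : ∀ w : ℂ, ‖w‖ = 1 → ‖P.eval w‖ ≤ M) :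
    ∀ w : ℂ, 1 ≤ ‖w‖ → ‖P.eval w‖ ≤ M * ‖w‖ ^ n := by
  intro w hw
  have hw0 : w ≠ 0 := by
    intro h; rw [h] at hw; simp at hw; linarith
  have hkey := rev_eval (P := P) hw0
  have habs : ‖(reverse P).eval w⁻¹‖ * ‖w‖ ^ P.natDegree
      = ‖P.eval w‖ := by
    rw [← norm_pow, ← norm_mul, hkey]
  have hwi : ‖w⁻¹‖ ≤ 1 := by
    rw [norm_inv]
    exact inv_le_one_of_one_le₀ hw
  have hq := rev_bound hMb w⁻¹ hwi
  rw [← habs, hP]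
  exact mul_le_mul_of_nonneg_right hq (by positivity)

private lemma lc_bound {P : ℂ[X]} {M : ℝ}
    (hMb : ∀ w : ℂ, ‖w‖ = 1 → ‖P.eval w‖ ≤ M) :
    ‖P.leadingCoeff‖ ≤ M := by
  have := rev_bound hMb 0 (by simp)
  rwa [← coeff_zero_reverse, coeff_zero_eq_eval_zero]

private lemma polar_bound {P : ℂ[X]} {n : ℕ} (hn : 0 < n) (hP : P.natDegree = n) {M : ℝ}
    (hM0 : 0 < M)
    (hgrow : ∀ w : ℂ, 1 ≤ ‖w‖ → ‖P.eval w‖ ≤ M * ‖w‖ ^ n)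
    (hlc : ‖P.leadingCoeff‖ ≤ M)
    {α w : ℂ} (hα : 1 < ‖α‖) (hw : 1 < ‖w‖)
    (hwα : ‖w‖ < ‖α‖) :
    ‖(n:ℂ) * P.eval w + (α - w) * P.derivative.eval w‖
      ≤ n * M * ‖α‖ * ‖w‖ ^ (n - 1) := by
  by_contra hcon
  push_neg at hcon
  set D : ℂ := (n:ℂ) * P.eval w + (α - w) * P.derivative.eval w with hD
  set c : ℂ := (n:ℂ) * (M:ℂ) * α * w ^ (n-1) with hc
  have hcabs : ‖c‖ = n * M * ‖α‖ * ‖w‖ ^ (n-1) := by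
    rw [hc, norm_mul, norm_mul, norm_mul, norm_pow, Complex.norm_natCast, Complex.norm_real, Real.norm_eq_abs,
      abs_of_pos hM0]
  have hcpos : 0 < ‖c‖ := by
    rw [hcabs]
    have hn' : (0:ℝ) < n := Nat.cast_pos.mpr hn
    positivity
  have hc0 : c ≠ 0 := by
    intro h; rw [h] at hcpos; simp at hcpos
  set β : ℂ := D / c with hβ
  have hβabs : 1 < ‖β‖ := by
    rw [hβ, norm_div]
    rw [lt_div_iff₀ hcpos, one_mul, hcabs]
    exact hcon
  set R : ℂ[X] := P - C (β * (M:ℂ)) * X ^ n with hR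
  have hβM : M < ‖β * (M:ℂ)‖ := by
    rw [norm_mul, Complex.norm_real, Real.norm_eq_abs, abs_of_pos hM0]
    nlinarith
  have hcoeffn : R.coeff n = P.coeff n - β * (M:ℂ) := by
    rw [hR, coeff_sub, coeff_C_mul, coeff_X_pow, if_pos rfl, mul_one]
  have hcn : P.coeff n - β * (M:ℂ) ≠ 0 := by
    intro h
    have : P.coeff n = β * (M:ℂ) := by linear_combination h
    have hPc : ‖P.coeff n‖ ≤ M := by
      rw [← hP, ← leadingCoeff]; exact hlc
    rw [this] at hPc
    linarith
  have hRdeg : R.natDegree = n := by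
    apply natDegree_eq_of_le_of_coeff_ne_zero
    · refine le_trans (natDegree_sub_le _ _) ?_
      simp only [hP, max_le_iff]
      refine ⟨le_refl n, le_trans (natDegree_C_mul_le _ _) ?_⟩
      simp
    · rw [hcoeffn]; exact hcn
  have hR0 : R ≠ 0 := by
    intro h; rw [h, natDegree_zero] at hRdeg; omega
  have hroots : ∀ r ∈ R.roots, ‖r‖ ≤ 1 := by
    intro r hr
    by_contra hr1
    push_neg at hr1
    have hre : R.eval r = 0 := (mem_roots hR0).mp hr
    have hPr : P.eval r = β * (M:ℂ) * r ^ n := by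
      rw [hR] at hre
      simp only [eval_sub, eval_mul, eval_C, eval_pow, eval_X] at hre
      linear_combination hre
    have h1 : ‖P.eval r‖ ≤ M * ‖r‖ ^ n := hgrow r (le_of_lt hr1)
    have h2 : ‖P.eval r‖ = ‖β * (M:ℂ)‖ * ‖r‖ ^ n := by
      rw [hPr, norm_mul, norm_pow]
    have hrn : (0:ℝ) < ‖r‖ ^ n := by positivity
    nlinarith
  have hwα' : w ≠ α := by
    intro h; rw [h] at hwα; exact lt_irrefl _ hwα
  have hNE := laguerre hn hRdeg hroots hα hw hwα'
  apply hNE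
  have hReval : R.eval w = P.eval w - β * (M:ℂ) * w ^ n := by
    simp [hR]
  have hRder : R.derivative.eval w
      = P.derivative.eval w - β * (M:ℂ) * ((n:ℂ) * w ^ (n-1)) := by
    rw [hR, derivative_sub, derivative_C_mul, derivative_X_pow]
    simp only [eval_sub, eval_mul, eval_C, eval_natCast, eval_pow, eval_X]
  have hwn : w ^ n = w ^ (n-1) * w := by
    rw [← pow_succ, Nat.sub_add_cancel hn]
  have hβc : β * c = D := div_mul_cancel₀ D hc0
  rw [hReval, hRder]
  have : (n:ℂ) * (P.eval w - β * (M:ℂ) * w ^ n)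
      + (α - w) * (P.derivative.eval w - β * (M:ℂ) * ((n:ℂ) * w ^ (n-1)))
      = D - β * c := by
    rw [hD, hc, hwn]; ring
  rw [this, hβc, sub_self]

theorem aziz_shah_polar (n : ℕ) (P : Polynomial ℂ) (hP : P.natDegree = n)
    (α : ℂ) (hα : 1 < ‖α‖) (z : ℂ) (hz : ‖z‖ = 1) :
    ‖(n : ℂ) * P.eval z + (α - z) * P.derivative.eval z‖ ≤
      (n : ℝ) * ‖α‖ *
        sSup ((fun w => ‖P.eval w‖) '' {w : ℂ | ‖w‖ = 1}) := by
  have hsph : {w : ℂ | ‖w‖ = 1} = Metric.sphere (0:ℂ) 1 := by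
    ext w; simp [Complex.dist_eq]
  set M : ℝ := sSup ((fun w => ‖P.eval w‖) '' {w : ℂ | ‖w‖ = 1}) with hM
  have hcomp : IsCompact ((fun w => ‖P.eval w‖) '' {w : ℂ | ‖w‖ = 1}) := by
    rw [hsph]
    exact (isCompact_sphere (0:ℂ) 1).image (continuous_norm.comp P.continuous)
  have hbdd : BddAbove ((fun w => ‖P.eval w‖) '' {w : ℂ | ‖w‖ = 1}) :=
    hcomp.bddAbove
  have hMb : ∀ w : ℂ, ‖w‖ = 1 → ‖P.eval w‖ ≤ M :=
    fun w hw => le_csSup hbdd ⟨w, hw, rfl⟩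
  rcases Nat.eq_zero_or_pos n with hn | hn
  · have hd : P.derivative = 0 := by
      have h0 : P.natDegree = 0 := hP.trans hn
      conv_lhs => rw [Polynomial.eq_C_of_natDegree_eq_zero h0]
      exact derivative_C
    rw [hn, hd]
    simp
  · have hP0 : P ≠ 0 := by
      intro h; rw [h, natDegree_zero] at hP; omega
    have hM0 : 0 < M :=
      lt_of_lt_of_le (norm_pos_iff.mpr (leadingCoeff_ne_zero.mpr hP0)) (lc_bound hMb)
    have hgrow := grow_bound hP hMb
    have hlc := lc_bound hMb
    have hstep : ∀ t : ℝ, t ∈ Set.Ioo (1:ℝ) (‖α‖) →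
        ‖(n:ℂ) * P.eval ((t:ℂ)*z) + (α - (t:ℂ)*z) * P.derivative.eval ((t:ℂ)*z)‖
          ≤ n * M * ‖α‖ * t ^ (n-1) := by
      intro t ht
      have habs : ‖(t:ℂ)*z‖ = t := by
        rw [norm_mul, Complex.norm_real, Real.norm_eq_abs, hz, mul_one, abs_of_pos (lt_trans one_pos ht.1)]
      have h1 : 1 < ‖(t:ℂ)*z‖ := by rw [habs]; exact ht.1
      have h2 : ‖(t:ℂ)*z‖ < ‖α‖ := by rw [habs]; exact ht.2
      have := polar_bound hn hP hM0 hgrow hlc hα h1 h2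
      rwa [habs] at this
    have c1 : Continuous fun t : ℝ => ((t:ℂ)*z) :=
      Complex.continuous_ofReal.mul continuous_const
    have hFcont : Continuous (fun t : ℝ =>
        ‖(n:ℂ) * P.eval ((t:ℂ)*z) + (α - (t:ℂ)*z) * P.derivative.eval ((t:ℂ)*z)‖) :=
      continuous_norm.comp
        (((continuous_const.mul (P.continuous.comp c1))).add
          (((continuous_const.sub c1)).mul ((P.derivative.continuous.comp c1))))
    have hF : Filter.Tendsto (fun t : ℝ =>
        ‖(n:ℂ) * P.eval ((t:ℂ)*z) + (α - (t:ℂ)*z) * P.derivative.eval ((t:ℂ)*z)‖)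
        (nhdsWithin 1 (Set.Ioi 1))
        (nhds (‖(n:ℂ) * P.eval z + (α - z) * P.derivative.eval z‖)) := by
      have := (hFcont.continuousAt (x := 1)).mono_left (nhdsWithin_le_nhds (s := Set.Ioi (1:ℝ)))
      simpa using this
    have hG : Filter.Tendsto (fun t : ℝ => (n:ℝ) * M * ‖α‖ * t ^ (n-1))
        (nhdsWithin 1 (Set.Ioi 1)) (nhds ((n:ℝ) * M * ‖α‖)) := by
      have hGc : Continuous (fun t : ℝ => (n:ℝ) * M * ‖α‖ * t ^ (n-1)) := by
        continuity
      have := (hGc.continuousAt (x := 1)).mono_left (nhdsWithin_le_nhds (s := Set.Ioi (1:ℝ)))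
      simpa using this
    have hle := le_of_tendsto_of_tendsto hF hG ?_
    · calc ‖(n:ℂ) * P.eval z + (α - z) * P.derivative.eval z‖
          ≤ (n:ℝ) * M * ‖α‖ := hle
        _ = (n:ℝ) * ‖α‖ * M := by ring
    · filter_upwards [Ioo_mem_nhdsGT_of_mem (Set.mem_Ico.mpr ⟨le_refl (1:ℝ), hα⟩)] with t ht
      exact hstep t ht
end

section
/- If P is a complex polynomial of degree n with no zeros in the open unit disk |z| < 1, then for every p ≥ 1, (∫₀^{2π} |P'(e^{iθ})|^p dθ)^{1/p} ≤ n·C_p·(∫₀^{2π} |P(e^{iθ})|^p dθ)^{1/p}, where C_p = ((1/2π)∫₀^{2π} |1+e^{iφ}|^p dφ)^{-1/p}. -/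
open Polynomial Real MeasureTheory Finset Complex

noncomputable section DeBruijnAux

namespace DeBruijn

local notation "conj'" => starRingEnd ℂ

def E (t : ℝ) : ℂ := Complex.exp (t * Complex.I)

lemma abs_E (t : ℝ) : ‖(E t)‖ = 1 := Complex.norm_exp_ofReal_mul_I t

lemma E_add (s t : ℝ) : E (s + t) = E s * E t := by
  unfold E; rw [Complex.ofReal_add, add_mul, Complex.exp_add]

lemma E_zero : E 0 = 1 := by simp [E]

lemma E_nat_mul (k : ℕ) (t : ℝ) : E (k * t) = E t ^ k := by
  unfold E; rw [Complex.ofReal_mul, Complex.ofReal_natCast, mul_assoc, Complex.exp_nat_mul]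

lemma E_int_mul (d : ℤ) (t : ℝ) : E (d * t) = E t ^ d := by
  unfold E; rw [Complex.ofReal_mul, Complex.ofReal_intCast, mul_assoc, Complex.exp_int_mul]

lemma conj_E (t : ℝ) : (starRingEnd ℂ) (E t) = E (-t) := by
  unfold E
  rw [← Complex.exp_conj]
  congr 1
  simp

lemma E_periodic : Function.Periodic E (2 * π) := by
  intro t
  rw [E_add]
  unfold E
  rw [show ((2 * π : ℝ) : ℂ) * Complex.I = 2 * π * Complex.I by push_cast; ring,
    Complex.exp_two_pi_mul_I, mul_one]

lemma E_ne_zero (t : ℝ) : E t ≠ 0 := Complex.exp_ne_zero _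

lemma contE : Continuous E := by
  unfold E
  exact Complex.continuous_exp.comp (Complex.continuous_ofReal.mul continuous_const)

lemma sq_abs_form (c1 c2 : ℂ) (α : ℝ) :
    ‖(c1 + E α * c2)‖ ^ (2:ℕ) =
      ‖c1‖ ^ 2 + ‖c2‖ ^ 2 +
        2 * (‖c1‖ * ‖c2‖) * Real.cos (α - (c1 * conj' c2).arg) := by
  rw [Complex.sq_norm, Complex.normSq_add]
  have hE : Complex.normSq (E α) = 1 := by
    have := abs_E α
    rw [← Complex.sq_norm, this]
    norm_num
  have h1 : Complex.normSq (E α * c2) = Complex.normSq c2 := by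
    rw [Complex.normSq_mul, hE, one_mul]
  set w := c1 * conj' c2 with hw
  have h2 : (c1 * conj' (E α * c2)).re =
      ‖c1‖ * ‖c2‖ * Real.cos (α - w.arg) := by
    have e1 : c1 * conj' (E α * c2) = w * E (-α) := by
      rw [map_mul, conj_E]
      ring
    have e2 : w = (‖w‖ : ℂ) * E w.arg := by
      rw [show E w.arg = Complex.exp (w.arg * Complex.I) from rfl]
      exact (Complex.norm_mul_exp_arg_mul_I w).symm
    have e6 : w * E (-α) = (‖w‖ : ℂ) * E (w.arg + -α) := by
      conv_lhs => rw [e2]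
      rw [mul_assoc, ← E_add]
    rw [e1, e6, Complex.re_ofReal_mul]
    have e3 : (E (w.arg + -α)).re = Real.cos (w.arg + -α) := Complex.exp_ofReal_mul_I_re _
    rw [e3]
    have e4 : ‖w‖ = ‖c1‖ * ‖c2‖ := by
      rw [hw, norm_mul, Complex.norm_conj]
    rw [e4]
    have e5 : Real.cos (w.arg + -α) = Real.cos (α - w.arg) := by
      rw [show w.arg + -α = -(α - w.arg) by ring, Real.cos_neg]
    rw [e5]
  rw [h1, h2, ← Complex.sq_norm c1, ← Complex.sq_norm c2]
  ring

lemma pt_form (p : ℝ) (c1 c2 : ℂ) (α : ℝ) :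
    ‖(c1 + E α * c2)‖ ^ p =
      (‖c1‖ ^ 2 + ‖c2‖ ^ 2 +
        2 * (‖c1‖ * ‖c2‖) *
          Real.cos (α - (c1 * conj' c2).arg)) ^ (p/2) := by
  rw [← sq_abs_form]
  rw [← Real.rpow_natCast (‖(c1 + E α * c2)‖) 2, ← Real.rpow_mul (norm_nonneg _)]
  norm_num
  rw [show (2:ℝ) * (p/2) = p by ring]

lemma cos_int_periodic (a b : ℝ) (p : ℝ) :
    Function.Periodic (fun t => (a + b * Real.cos t) ^ (p/2)) (2*π) := by
  intro t
  simp [Real.cos_add_two_pi]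

lemma canon (p : ℝ) (c1 c2 : ℂ) :
    (∫ α in (0:ℝ)..2*π, ‖(c1 + E α * c2)‖ ^ p) =
      ∫ α in (0:ℝ)..2*π, (‖c1‖ ^ 2 + ‖c2‖ ^ 2 +
        2 * (‖c1‖ * ‖c2‖) * Real.cos α) ^ (p/2) := by
  set δ := (c1 * conj' c2).arg with hδ
  set a := ‖c1‖ ^ 2 + ‖c2‖ ^ 2 with ha
  set b := 2 * (‖c1‖ * ‖c2‖) with hb
  set f : ℝ → ℝ := fun t => (a + b * Real.cos t) ^ (p/2) with hf
  have h1 : (∫ α in (0:ℝ)..2*π, ‖(c1 + E α * c2)‖ ^ p) =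
      ∫ α in (0:ℝ)..2*π, f (α - δ) := by
    apply intervalIntegral.integral_congr
    intro α _
    rw [hf]
    simp only
    rw [pt_form]
  have hper : Function.Periodic f (2*π) := cos_int_periodic a b p
  rw [h1, intervalIntegral.integral_comp_sub_right f δ]
  have h2 := hper.intervalIntegral_add_eq (0 - δ) 0
  rw [show (0:ℝ) - δ + 2*π = 2*π - δ by ring, show (0:ℝ) + 2*π = 2*π by ring] at h2
  rw [h2]

lemma abs_mono_pt (a b : ℝ) (h0 : 0 ≤ a) (hab : a ≤ b) (α : ℝ) :
    ‖((a:ℂ) + E α * (a:ℂ))‖ ≤ ‖((a:ℂ) + E α * (b:ℂ))‖ := by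
  have hsq : ∀ y : ℝ, 0 ≤ y →
      ‖((a:ℂ) + E α * (y:ℂ))‖ ^ (2:ℕ) = a^2 + y^2 + 2*(a*y)*Real.cos α := by
    intro y hy
    have := sq_abs_form (a:ℂ) (y:ℂ) α
    rw [show ((a:ℂ) * conj' (y:ℂ)).arg = 0 by
        rw [Complex.conj_ofReal, ← Complex.ofReal_mul]
        exact Complex.arg_ofReal_of_nonneg (by positivity)] at this
    rw [this, sub_zero, Complex.norm_real, Real.norm_eq_abs, Complex.norm_real, Real.norm_eq_abs, _root_.abs_of_nonneg h0,
      _root_.abs_of_nonneg hy]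
  have hb0 : 0 ≤ b := le_trans h0 hab
  have h1 := hsq a h0
  have h2 := hsq b hb0
  have hcos := Real.neg_one_le_cos α
  have hsqle : ‖((a:ℂ) + E α * (a:ℂ))‖ ^ (2:ℕ) ≤
      ‖((a:ℂ) + E α * (b:ℂ))‖ ^ (2:ℕ) := by
    rw [h1, h2]
    have hin : 0 ≤ b + a + 2*a*Real.cos α := by nlinarith
    nlinarith [mul_nonneg (sub_nonneg.mpr hab) hin]
  have := Real.sqrt_le_sqrt hsqle
  rwa [Real.sqrt_sq (norm_nonneg _), Real.sqrt_sq (norm_nonneg _)] at this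

lemma re_bound_aux (u a : ℂ) (hu : ‖u‖ = 1) (ha : 1 ≤ ‖a‖) :
    2 * (u * conj' (u - a)).re ≤ Complex.normSq (u - a) := by
  have h1 : Complex.normSq u = 1 := by
    rw [Complex.normSq_eq_norm_sq, hu]; norm_num
  have h2 : (1:ℝ) ≤ Complex.normSq a := by
    rw [Complex.normSq_eq_norm_sq]; nlinarith
  have e1 : u * conj' (u - a) = (Complex.normSq u : ℂ) - u * conj' a := by
    rw [map_sub, mul_sub, Complex.mul_conj]
  have e2 : Complex.normSq (u - a) =
      Complex.normSq u + Complex.normSq a - 2 * (u * conj' a).re := by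
    have := Complex.normSq_sub u a
    linarith [this]
  rw [e1]
  simp only [Complex.sub_re, Complex.ofReal_re]
  rw [e2, h1]
  linarith

lemma multiset_re_bound (s : Multiset ℂ) (hs : ∀ w ∈ s, 1 ≤ ‖w‖)
    (u : ℂ) (hu : ‖u‖ = 1) :
    2 * (u * (Multiset.map (fun w => X - C w) s).prod.derivative.eval u *
      conj' ((Multiset.map (fun w => X - C w) s).prod.eval u)).re ≤
      s.card * ‖((Multiset.map (fun w => X - C w) s).prod.eval u)‖ ^ 2 := by
  induction s using Multiset.induction_on with
  | empty => simp
  | cons a t IH =>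
    have ha : 1 ≤ ‖a‖ := hs a (Multiset.mem_cons_self a t)
    have ht : ∀ w ∈ t, 1 ≤ ‖w‖ := fun w hw => hs w (Multiset.mem_cons_of_mem hw)
    specialize IH ht
    set q := (Multiset.map (fun w => X - C w) t).prod with hq
    set A := q.eval u with hA
    set B := q.derivative.eval u with hB
    set c := u - a with hc
    have hprod : (Multiset.map (fun w => X - C w) (a ::ₘ t)).prod = (X - C a) * q := by
      rw [Multiset.map_cons, Multiset.prod_cons]
    have hder : ((X - C a) * q).derivative = q + (X - C a) * q.derivative := by
      rw [derivative_mul, derivative_sub, derivative_X, derivative_C, sub_zero, one_mul]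
    have heval : ((X - C a) * q).eval u = c * A := by simp [hc, hA]
    have hdeval : ((X - C a) * q).derivative.eval u = A + c * B := by
      rw [hder]; simp [hc, hA, hB]
    rw [hprod, heval, hdeval]
    have expand : u * (A + c * B) * conj' (c * A) =
        (Complex.normSq A : ℂ) * (u * conj' c) + (Complex.normSq c : ℂ) * (u * B * conj' A) := by
      have h1 : A * conj' A = (Complex.normSq A : ℂ) := Complex.mul_conj A
      have h2 : c * conj' c = (Complex.normSq c : ℂ) := Complex.mul_conj c
      rw [map_mul]
      linear_combination u * conj' c * h1 + u * B * conj' A * h2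
    rw [expand]
    simp only [Complex.add_re, Complex.re_ofReal_mul]
    have key := re_bound_aux u a hu ha
    have habs : ‖(c * A)‖ ^ 2 = Complex.normSq c * Complex.normSq A := by
      rw [Complex.sq_norm, Complex.normSq_mul]
    rw [habs]
    have hsqA : ‖A‖ ^ 2 = Complex.normSq A := Complex.sq_norm A
    rw [hsqA] at IH
    have hcard : ((a ::ₘ t).card : ℝ) = t.card + 1 := by
      rw [Multiset.card_cons]; push_cast; ring
    rw [hcard]
    have hnsA : 0 ≤ Complex.normSq A := Complex.normSq_nonneg A
    have hnsc : 0 ≤ Complex.normSq c := Complex.normSq_nonneg c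
    nlinarith [IH]

lemma deriv_bound (n : ℕ) (P : Polynomial ℂ) (hP : P.natDegree = n)
    (hzeros : ∀ z : ℂ, ‖z‖ < 1 → P.eval z ≠ 0)
    (u : ℂ) (hu : ‖u‖ = 1) :
    ‖(P.derivative.eval u)‖ ≤
      ‖((n : ℂ) * P.eval u - u * P.derivative.eval u)‖ := by
  have hP0 : P ≠ 0 := by
    intro h
    exact hzeros 0 (by simp) (by simp [h])
  have hsplit : P.Splits := IsAlgClosed.splits P
  have hfact : P = C P.leadingCoeff * (P.roots.map fun a => X - C a).prod :=
    hsplit.eq_prod_roots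
  have hcard : P.roots.card = n := by
    rw [← hP]; exact (splits_iff_card_roots.mp hsplit)
  have hroots : ∀ w ∈ P.roots, 1 ≤ ‖w‖ := by
    intro w hw
    by_contra h
    exact hzeros w (by linarith [not_le.mp h]) ((mem_roots hP0).mp hw)
  have key : 2 * (u * P.derivative.eval u * conj' (P.eval u)).re ≤
      n * ‖(P.eval u)‖ ^ 2 := by
    have base := multiset_re_bound P.roots hroots u hu
    set q := (Multiset.map (fun w => X - C w) P.roots).prod with hq
    set L := P.leadingCoeff with hL
    have hPq : P.eval u = L * q.eval u := by
      conv_lhs => rw [hfact]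
      simp
    have hP'q : P.derivative.eval u = L * q.derivative.eval u := by
      conv_lhs => rw [hfact]
      rw [derivative_C_mul]
      simp
    have e1 : u * P.derivative.eval u * conj' (P.eval u) =
        (Complex.normSq L : ℂ) * (u * q.derivative.eval u * conj' (q.eval u)) := by
      rw [hPq, hP'q, map_mul]
      have : L * conj' L = (Complex.normSq L : ℂ) := Complex.mul_conj L
      linear_combination u * q.derivative.eval u * conj' (q.eval u) * this
    rw [e1, Complex.re_ofReal_mul, hPq, norm_mul, mul_pow, Complex.sq_norm L, hcard] at *
    have hns : 0 ≤ Complex.normSq L := Complex.normSq_nonneg L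
    have h2 : ‖(q.eval u)‖ ^ 2 = Complex.normSq (q.eval u) := Complex.sq_norm _
    nlinarith [base]
  set A := P.eval u with hA
  set B := P.derivative.eval u with hB
  have habs : ‖B‖ = ‖(u * B)‖ := by
    rw [norm_mul, hu, one_mul]
  rw [habs]
  have hsq : ‖(u * B)‖ ^ 2 ≤ ‖((n : ℂ) * A - u * B)‖ ^ 2 := by
    rw [Complex.sq_norm, Complex.sq_norm, Complex.normSq_sub]
    have e : ((n:ℂ) * A * conj' (u * B)).re = n * (u * B * conj' A).re := by
      have h : (n:ℂ) * A * conj' (u * B) = (n:ℝ) * conj' (u * B * conj' A) := by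
        simp only [map_mul, Complex.conj_conj]
        push_cast
        ring
      rw [h, Complex.re_ofReal_mul, Complex.conj_re]
    rw [e]
    have e2 : Complex.normSq ((n:ℂ) * A) = (n:ℝ)^2 * Complex.normSq A := by
      rw [Complex.normSq_mul, show ((n:ℕ):ℂ) = ((n:ℝ):ℂ) by push_cast; ring,
        Complex.normSq_ofReal]
      ring
    rw [e2]
    have hA2 : ‖A‖ ^ 2 = Complex.normSq A := Complex.sq_norm A
    rw [hA2] at key
    nlinarith [key]
  have h1 := Real.sqrt_le_sqrt hsq
  rwa [Real.sqrt_sq (norm_nonneg _), Real.sqrt_sq (norm_nonneg _)] at h1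

lemma geo_sum (n : ℕ) (hn : 0 < n) (d : ℤ) (γ : ℝ) :
    ∑ j ∈ Finset.range n, E (d * (γ + 2 * π * j / n)) =
      if (n:ℤ) ∣ d then (n : ℂ) * E (d * γ) else 0 := by
  have hterm : ∀ j : ℕ, E (d * (γ + 2 * π * j / n)) = E (d * γ) * E ((2 * π * d / n)) ^ j := by
    intro j
    rw [← E_nat_mul, ← E_add]
    congr 1
    field_simp
  simp only [hterm]
  rw [← Finset.mul_sum]
  set r : ℂ := E (2 * π * d / n) with hr
  have hrn : r ^ n = 1 := by
    rw [← E_nat_mul]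
    have : (n : ℝ) * (2 * π * d / n) = d * (2 * π) := by
      field_simp
    rw [this]
    unfold E
    rw [show ((d * (2*π) : ℝ) : ℂ) * Complex.I = (d:ℂ) * (2 * π * Complex.I) by push_cast; ring]
    exact Complex.exp_int_mul_two_pi_mul_I d
  have hr1 : r = 1 ↔ (n:ℤ) ∣ d := by
    constructor
    · intro h
      rw [hr] at h
      unfold E at h
      rw [Complex.exp_eq_one_iff] at h
      obtain ⟨m, hm⟩ := h
      refine ⟨m, ?_⟩
      have hC : ((2 * π * d / n : ℝ) : ℂ) = ((m * (2 * π) : ℝ) : ℂ) := by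
        apply mul_right_cancel₀ Complex.I_ne_zero
        rw [hm]
        push_cast
        ring
      have hre : (2 * π * d / n : ℝ) = m * (2 * π) := by
        exact_mod_cast hC
      have hπ : (0:ℝ) < π := Real.pi_pos
      have : (d : ℝ) = (n : ℝ) * m := by
        have hn' : (n:ℝ) ≠ 0 := Nat.cast_ne_zero.mpr hn.ne'
        field_simp at hre
        nlinarith [hre]
      exact_mod_cast this
    · rintro ⟨m, rfl⟩
      rw [hr]
      have key : (2 * π * (((n:ℤ) * m : ℤ) : ℝ) / (n:ℝ)) = ((m * (2 * π) : ℝ)) := by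
        have hn' : (n:ℝ) ≠ 0 := Nat.cast_ne_zero.mpr hn.ne'
        push_cast
        field_simp
      rw [key]
      unfold E
      rw [show ((m * (2*π) : ℝ) : ℂ) * Complex.I = (m:ℂ) * (2 * π * Complex.I) by push_cast; ring]
      exact Complex.exp_int_mul_two_pi_mul_I m
  by_cases hd : (n:ℤ) ∣ d
  · rw [if_pos hd]
    have : r = 1 := hr1.mpr hd
    rw [this]
    simp [mul_comm]
  · rw [if_neg hd]
    have hrne : r ≠ 1 := fun h => hd (hr1.mp h)
    rw [geom_sum_eq hrne, hrn]
    simp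

def xj (n : ℕ) (α : ℝ) (j : ℕ) : ℝ := (α + 2 * π * j) / n
def K (n : ℕ) (α : ℝ) (j : ℕ) : ℂ := ∑ m ∈ Finset.range n, E (m * xj n α j)
def W (n : ℕ) (α : ℝ) (j : ℕ) : ℝ := Complex.normSq (K n α j) / n ^ 2

lemma W_nonneg (n : ℕ) (α : ℝ) (j : ℕ) : 0 ≤ W n α j :=
  div_nonneg (Complex.normSq_nonneg _) (by positivity)

lemma inner_sum (n : ℕ) (hn : 0 < n) (k l : ℕ) (hk : k ≤ n) (hl : l < n) (γ : ℝ) :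
    (∑ m ∈ Finset.range n,
      if (n:ℤ) ∣ ((m:ℤ) - l + k) then (n:ℂ) * E ((((m:ℤ) - (l:ℤ) + (k:ℤ) : ℤ) : ℝ) * γ) else 0)
      = if k ≤ l then (n:ℂ) else (n:ℂ) * E (n * γ) := by
  have hn' : (0:ℤ) < n := by exact_mod_cast hn
  have hk' : (k:ℤ) ≤ n := by exact_mod_cast hk
  have hl' : (l:ℤ) < n := by exact_mod_cast hl
  have uniq : ∀ m ∈ Finset.range n, ∀ t : ℤ, ((m:ℤ) - l + k = n * t) → t = 0 ∨ t = 1 := by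
    intro m hm t ht
    have hm' : (m:ℤ) < n := by exact_mod_cast Finset.mem_range.mp hm
    have hm0 : (0:ℤ) ≤ m := Int.natCast_nonneg m
    have hl0 : (0:ℤ) ≤ l := Int.natCast_nonneg l
    have hk0 : (0:ℤ) ≤ k := Int.natCast_nonneg k
    have hb1 : -(n:ℤ) < (n:ℤ) * t := by rw [← ht]; linarith
    have hb2 : (n:ℤ) * t < 2 * n := by rw [← ht]; linarith
    have t0 : 0 ≤ t := by nlinarith
    have t2 : t < 2 := by nlinarith
    omega
  rcases le_or_gt k l with hkl | hkl
  · rw [if_pos hkl]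
    rw [Finset.sum_eq_single_of_mem (l - k) (by rw [Finset.mem_range]; omega)]
    · have hc : ((l - k : ℕ) : ℤ) - l + k = 0 := by omega
      rw [hc, if_pos (dvd_zero _)]
      norm_num [E_zero]
    · intro m hm hne
      rw [if_neg]
      rintro ⟨t, ht⟩
      rcases uniq m hm t ht with rfl | rfl
      · have : (m:ℤ) = (l:ℤ) - k := by omega
        have : m = l - k := by omega
        exact hne this
      · have hm' : (m:ℤ) < n := by exact_mod_cast Finset.mem_range.mp hm
        omega
  · rw [if_neg (by omega)]
    rw [Finset.sum_eq_single_of_mem (l + n - k) (by rw [Finset.mem_range]; omega)]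
    · have hc : ((l + n - k : ℕ) : ℤ) - l + k = n := by omega
      rw [hc, if_pos ⟨1, by ring⟩]
      norm_num
    · intro m hm hne
      rw [if_neg]
      rintro ⟨t, ht⟩
      rcases uniq m hm t ht with rfl | rfl
      · have hm0 : (0:ℤ) ≤ m := Int.natCast_nonneg m
        omega
      · have : (m:ℤ) = (l:ℤ) + n - k := by omega
        have : m = l + n - k := by omega
        exact hne this

lemma outer_sum (n k : ℕ) (c1 c2 : ℂ) :
    ∑ l ∈ Finset.range n, (if k ≤ l then c1 else c2) = ((n - k : ℕ) : ℂ) * c1 + (min k n : ℕ) * c2 := by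
  rw [Finset.sum_ite]
  have h1 : (Finset.range n).filter (fun l => k ≤ l) = Finset.Ico k n := by
    ext a; simp [Finset.mem_Ico, Finset.mem_filter, Finset.mem_range]; omega
  have h2 : (Finset.range n).filter (fun l => ¬ k ≤ l) = Finset.range (min k n) := by
    ext a; simp [Finset.mem_filter, Finset.mem_range]; omega
  rw [h1, h2]
  simp [Finset.sum_const, Nat.card_Ico, nsmul_eq_mul]

lemma Kexpand (n : ℕ) (α : ℝ) (j k : ℕ) :
    K n α j * conj' (K n α j) * E (k * xj n α j) =
      ∑ m ∈ Finset.range n, ∑ l ∈ Finset.range n,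
        E ((((m:ℤ) - (l:ℤ) + (k:ℤ) : ℤ) : ℝ) * xj n α j) := by
  have hconj : conj' (K n α j) = ∑ l ∈ Finset.range n, E (-(l * xj n α j)) := by
    unfold K
    rw [map_sum]
    exact Finset.sum_congr rfl (fun l _ => conj_E _)
  rw [hconj]
  unfold K
  rw [Finset.sum_mul_sum, Finset.sum_mul]
  apply Finset.sum_congr rfl
  intro m _
  rw [Finset.sum_mul]
  apply Finset.sum_congr rfl
  intro l _
  rw [← E_add, ← E_add]
  congr 1
  push_cast
  ring

lemma S_eq (n : ℕ) (hn : 0 < n) (α : ℝ) (k : ℕ) (hk : k ≤ n) :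
    ∑ j ∈ Finset.range n, (K n α j * conj' (K n α j) * E (k * xj n α j)) =
      (n:ℂ) * (((n:ℂ) - (k:ℂ)) + (k:ℂ) * E α) := by
  have hn' : (n:ℝ) ≠ 0 := Nat.cast_ne_zero.mpr hn.ne'
  calc ∑ j ∈ Finset.range n, (K n α j * conj' (K n α j) * E (k * xj n α j))
      = ∑ j ∈ Finset.range n, ∑ m ∈ Finset.range n, ∑ l ∈ Finset.range n,
          E ((((m:ℤ) - (l:ℤ) + (k:ℤ) : ℤ) : ℝ) * xj n α j) := by
        exact Finset.sum_congr rfl (fun j _ => Kexpand n α j k)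
    _ = ∑ m ∈ Finset.range n, ∑ l ∈ Finset.range n, ∑ j ∈ Finset.range n,
          E ((((m:ℤ) - (l:ℤ) + (k:ℤ) : ℤ) : ℝ) * xj n α j) := by
        rw [Finset.sum_comm]
        exact Finset.sum_congr rfl (fun m _ => Finset.sum_comm)
    _ = ∑ m ∈ Finset.range n, ∑ l ∈ Finset.range n,
          (if (n:ℤ) ∣ ((m:ℤ) - l + k) then (n:ℂ) * E ((((m:ℤ) - (l:ℤ) + (k:ℤ) : ℤ) : ℝ) * (α/n)) else 0) := by
        apply Finset.sum_congr rfl; intro m _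
        apply Finset.sum_congr rfl; intro l _
        rw [← geo_sum n hn ((m:ℤ) - l + k) (α/n)]
        apply Finset.sum_congr rfl; intro j _
        congr 1
        unfold xj
        ring
    _ = ∑ l ∈ Finset.range n, ∑ m ∈ Finset.range n,
          (if (n:ℤ) ∣ ((m:ℤ) - l + k) then (n:ℂ) * E ((((m:ℤ) - (l:ℤ) + (k:ℤ) : ℤ) : ℝ) * (α/n)) else 0) :=
        Finset.sum_comm
    _ = ∑ l ∈ Finset.range n, (if k ≤ l then (n:ℂ) else (n:ℂ) * E (n * (α/n))) := by
        apply Finset.sum_congr rfl; intro l hl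
        exact inner_sum n hn k l hk (Finset.mem_range.mp hl) (α/n)
    _ = (n:ℂ) * (((n:ℂ) - (k:ℂ)) + (k:ℂ) * E α) := by
        rw [outer_sum]
        have hmin : min k n = k := min_eq_left hk
        have hα : (n:ℝ) * (α / n) = α := by field_simp
        rw [hmin, hα, Nat.cast_sub hk]
        ring

lemma moment (n : ℕ) (hn : 0 < n) (α : ℝ) (k : ℕ) (hk : k ≤ n) :
    (n:ℂ) * ∑ j ∈ Finset.range n, ((W n α j : ℝ) : ℂ) * E (k * xj n α j)
      = ((n:ℂ) - (k:ℂ)) + (k:ℂ) * E α := by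
  have hn' : (n:ℂ) ≠ 0 := Nat.cast_ne_zero.mpr hn.ne'
  have hW : ∀ j, ((W n α j : ℝ) : ℂ) = K n α j * conj' (K n α j) / (n:ℂ)^2 := by
    intro j
    unfold W
    push_cast
    rw [Complex.mul_conj]
  have : ∑ j ∈ Finset.range n, ((W n α j : ℝ) : ℂ) * E (k * xj n α j)
      = (∑ j ∈ Finset.range n, K n α j * conj' (K n α j) * E (k * xj n α j)) / (n:ℂ)^2 := by
    rw [Finset.sum_div]
    apply Finset.sum_congr rfl; intro j _
    rw [hW j]
    ring
  rw [this, S_eq n hn α k hk]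
  field_simp

lemma W_sum (n : ℕ) (hn : 0 < n) (α : ℝ) : ∑ j ∈ Finset.range n, W n α j = 1 := by
  have h := moment n hn α 0 (Nat.zero_le n)
  have hn' : (n:ℂ) ≠ 0 := Nat.cast_ne_zero.mpr hn.ne'
  simp only [Nat.cast_zero, zero_mul, sub_zero, add_zero, E_zero, mul_one] at h
  have h3 : ((∑ j ∈ Finset.range n, W n α j : ℝ) : ℂ) = 1 := by
    push_cast
    exact mul_left_cancel₀ hn' (by rw [h, mul_one])
  exact_mod_cast h3

lemma evalsum (P : Polynomial ℂ) (N : ℕ) (h : P.natDegree < N) (v : ℂ) :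
    P.eval v = ∑ k ∈ Finset.range N, P.coeff k * v ^ k := by
  conv_lhs => rw [P.as_sum_range' N h]
  rw [eval_finset_sum]
  simp [eval_monomial]

lemma zderiv (P : Polynomial ℂ) (N : ℕ) (h : P.natDegree < N) (v : ℂ) :
    v * P.derivative.eval v = ∑ k ∈ Finset.range N, P.coeff k * k * v ^ k := by
  conv_lhs => rw [P.as_sum_range' N h]
  rw [derivative_sum]
  simp only [derivative_monomial]
  rw [eval_finset_sum, Finset.mul_sum]
  apply Finset.sum_congr rfl
  intro k _
  cases k with
  | zero => simp
  | succ m =>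
    simp only [eval_monomial, Nat.add_sub_cancel]
    push_cast
    rw [pow_succ]
    ring

lemma fejer_identity (n : ℕ) (hn : 0 < n) (P : Polynomial ℂ) (hPn : P.natDegree = n)
    (θ α : ℝ) :
    (n:ℂ) * ∑ j ∈ Finset.range n, ((W n α j : ℝ) : ℂ) * P.eval (E (θ + xj n α j)) =
      ((n:ℂ) * P.eval (E θ) - E θ * P.derivative.eval (E θ)) +
        E α * (E θ * P.derivative.eval (E θ)) := by
  have hN : P.natDegree < n + 1 := by omega
  have hL : ∀ j, P.eval (E (θ + xj n α j)) =
      ∑ k ∈ Finset.range (n+1), P.coeff k * (E θ ^ k * E (k * xj n α j)) := by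
    intro j
    rw [evalsum P (n+1) hN]
    apply Finset.sum_congr rfl
    intro k _
    rw [E_add, mul_pow, E_nat_mul]
  calc (n:ℂ) * ∑ j ∈ Finset.range n, ((W n α j : ℝ) : ℂ) * P.eval (E (θ + xj n α j))
      = ∑ k ∈ Finset.range (n+1), (P.coeff k * E θ ^ k) *
          ((n:ℂ) * ∑ j ∈ Finset.range n, ((W n α j : ℝ) : ℂ) * E (k * xj n α j)) := by
        simp only [hL, Finset.mul_sum]
        rw [Finset.sum_comm]
        apply Finset.sum_congr rfl
        intro k _
        apply Finset.sum_congr rfl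
        intro j _
        ring
    _ = ∑ k ∈ Finset.range (n+1), (P.coeff k * E θ ^ k) * (((n:ℂ) - (k:ℂ)) + (k:ℂ) * E α) := by
        apply Finset.sum_congr rfl
        intro k hk
        rw [moment n hn α k (Nat.lt_succ_iff.mp (Finset.mem_range.mp hk))]
    _ = ((n:ℂ) * P.eval (E θ) - E θ * P.derivative.eval (E θ)) +
        E α * (E θ * P.derivative.eval (E θ)) := by
        rw [evalsum P (n+1) hN, zderiv P (n+1) hN, Finset.mul_sum, Finset.mul_sum,
          ← Finset.sum_sub_distrib, ← Finset.sum_add_distrib]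
        apply Finset.sum_congr rfl
        intro k _
        ring

lemma contPE (P : Polynomial ℂ) : Continuous fun θ : ℝ => P.eval (E θ) :=
  P.continuous.comp contE

lemma cont_integrand (P : Polynomial ℂ) (p : ℝ) (hp : 1 ≤ p) :
    Continuous fun θ : ℝ => ‖(P.eval (E θ))‖ ^ p :=
  (continuous_norm.comp (contPE P)).rpow_const (fun _ => Or.inr (by linarith))

lemma shift_inv (P : Polynomial ℂ) (p : ℝ) (c : ℝ) :
    (∫ θ in (0:ℝ)..2*π, ‖(P.eval (E (θ + c)))‖ ^ p) =
      ∫ θ in (0:ℝ)..2*π, ‖(P.eval (E θ))‖ ^ p := by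
  have hper : Function.Periodic (fun θ : ℝ => ‖(P.eval (E θ))‖ ^ p) (2*π) := by
    intro t
    simp only [E_periodic t]
  rw [intervalIntegral.integral_comp_add_right (fun θ : ℝ => ‖(P.eval (E θ))‖ ^ p) c]
  have h2 := hper.intervalIntegral_add_eq c 0
  rw [show (0:ℝ) + c = c by ring, show (2*π + c : ℝ) = c + 2*π by ring, h2, zero_add]

lemma slice_bound (n : ℕ) (hn : 0 < n) (P : Polynomial ℂ) (hPn : P.natDegree = n)
    (p : ℝ) (hp : 1 ≤ p) (α : ℝ) :
    (∫ θ in (0:ℝ)..2*π, ‖(((n:ℂ) * P.eval (E θ) - E θ * P.derivative.eval (E θ)) +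
        E α * (E θ * P.derivative.eval (E θ)))‖ ^ p)
      ≤ (n:ℝ)^p * ∫ θ in (0:ℝ)..2*π, ‖(P.eval (E θ))‖ ^ p := by
  have h2π : (0:ℝ) ≤ 2*π := by positivity
  have hptw : ∀ θ : ℝ, ‖(((n:ℂ) * P.eval (E θ) - E θ * P.derivative.eval (E θ)) +
      E α * (E θ * P.derivative.eval (E θ)))‖ ^ p ≤
      (n:ℝ)^p * ∑ j ∈ Finset.range n, W n α j * ‖(P.eval (E (θ + xj n α j)))‖ ^ p := by
    intro θ
    rw [← fejer_identity n hn P hPn θ α]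
    have habs : ‖((n:ℂ) * ∑ j ∈ Finset.range n,
        ((W n α j : ℝ) : ℂ) * P.eval (E (θ + xj n α j)))‖ ≤
        (n:ℝ) * ∑ j ∈ Finset.range n, W n α j * ‖(P.eval (E (θ + xj n α j)))‖ := by
      rw [norm_mul, Complex.norm_natCast]
      apply mul_le_mul_of_nonneg_left _ (Nat.cast_nonneg n)
      refine le_trans (norm_sum_le _ _) ?_
      apply le_of_eq
      apply Finset.sum_congr rfl
      intro j _
      rw [norm_mul, Complex.norm_real, Real.norm_eq_abs, _root_.abs_of_nonneg (W_nonneg n α j)]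
    calc ‖((n:ℂ) * ∑ j ∈ Finset.range n,
          ((W n α j : ℝ) : ℂ) * P.eval (E (θ + xj n α j)))‖ ^ p
        ≤ ((n:ℝ) * ∑ j ∈ Finset.range n, W n α j * ‖(P.eval (E (θ + xj n α j)))‖) ^ p := by
          apply Real.rpow_le_rpow (norm_nonneg _) habs (by linarith)
      _ = (n:ℝ)^p * (∑ j ∈ Finset.range n, W n α j * ‖(P.eval (E (θ + xj n α j)))‖) ^ p := by
          rw [Real.mul_rpow (Nat.cast_nonneg n)]
          exact Finset.sum_nonneg fun j _ =>
            mul_nonneg (W_nonneg n α j) (norm_nonneg _)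
      _ ≤ (n:ℝ)^p * ∑ j ∈ Finset.range n, W n α j * ‖(P.eval (E (θ + xj n α j)))‖ ^ p := by
          apply mul_le_mul_of_nonneg_left _ (Real.rpow_nonneg (Nat.cast_nonneg n) p)
          exact Real.rpow_arith_mean_le_arith_mean_rpow (Finset.range n) _ _
            (fun j _ => W_nonneg n α j) (W_sum n hn α)
            (fun j _ => norm_nonneg _) hp
  have hcont1 : Continuous fun θ : ℝ => ‖(((n:ℂ) * P.eval (E θ) -
      E θ * P.derivative.eval (E θ)) + E α * (E θ * P.derivative.eval (E θ)))‖ ^ p := by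
    apply Continuous.rpow_const _ (fun _ => Or.inr (by linarith))
    exact continuous_norm.comp
      (((continuous_const.mul (contPE P)).sub (contE.mul (contPE P.derivative))).add
        (continuous_const.mul (contE.mul (contPE P.derivative))))
  have hcont2 : Continuous fun θ : ℝ =>
      (n:ℝ)^p * ∑ j ∈ Finset.range n, W n α j * ‖(P.eval (E (θ + xj n α j)))‖ ^ p :=
    continuous_const.mul (continuous_finset_sum _ (fun j _ =>
      continuous_const.mul ((continuous_norm.comp ((contPE P).comp
        (continuous_id.add continuous_const))).rpow_const (fun _ => Or.inr (by linarith)))))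
  calc (∫ θ in (0:ℝ)..2*π, ‖(((n:ℂ) * P.eval (E θ) -
        E θ * P.derivative.eval (E θ)) + E α * (E θ * P.derivative.eval (E θ)))‖ ^ p)
      ≤ ∫ θ in (0:ℝ)..2*π, (n:ℝ)^p * ∑ j ∈ Finset.range n,
          W n α j * ‖(P.eval (E (θ + xj n α j)))‖ ^ p := by
        apply intervalIntegral.integral_mono_on h2π
          (hcont1.intervalIntegrable _ _) (hcont2.intervalIntegrable _ _)
        intro θ _
        exact hptw θ
    _ = (n:ℝ)^p * ∫ θ in (0:ℝ)..2*π, ‖(P.eval (E θ))‖ ^ p := by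
        rw [intervalIntegral.integral_const_mul]
        congr 1
        rw [intervalIntegral.integral_finset_sum]
        · have : ∀ j ∈ Finset.range n,
              (∫ θ in (0:ℝ)..2*π, W n α j * ‖(P.eval (E (θ + xj n α j)))‖ ^ p) =
              W n α j * ∫ θ in (0:ℝ)..2*π, ‖(P.eval (E θ))‖ ^ p := by
            intro j _
            rw [intervalIntegral.integral_const_mul, shift_inv]
          rw [Finset.sum_congr rfl this, ← Finset.sum_mul, W_sum n hn α, one_mul]
        · intro j _
          apply Continuous.intervalIntegrable
          exact continuous_const.mul ((continuous_norm.comp ((contPE P).comp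
            (continuous_id.add continuous_const))).rpow_const (fun _ => Or.inr (by linarith)))

lemma theta_chain (n : ℕ) (P : Polynomial ℂ) (hPn : P.natDegree = n)
    (hzeros : ∀ z : ℂ, ‖z‖ < 1 → P.eval z ≠ 0) (p : ℝ) (hp : 1 ≤ p) (θ : ℝ) :
    (∫ α in (0:ℝ)..2*π, ‖(1 + E α)‖ ^ p) *
        ‖(P.derivative.eval (E θ))‖ ^ p ≤
      ∫ α in (0:ℝ)..2*π, ‖(((n:ℂ) * P.eval (E θ) - E θ * P.derivative.eval (E θ)) +
        E α * (E θ * P.derivative.eval (E θ)))‖ ^ p := by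
  have h2π : (0:ℝ) ≤ 2*π := by positivity
  set d := ‖(P.derivative.eval (E θ))‖ with hd
  set g := ‖((n:ℂ) * P.eval (E θ) - E θ * P.derivative.eval (E θ))‖ with hg
  have hd0 : 0 ≤ d := norm_nonneg _
  have hg0 : 0 ≤ g := norm_nonneg _
  have hdg : d ≤ g := deriv_bound n P hPn hzeros (E θ) (abs_E θ)
  have habs_d : ‖((d:ℂ))‖ = d := by
    rw [Complex.norm_real, Real.norm_eq_abs, _root_.abs_of_nonneg hd0]
  have habs_g : ‖((g:ℂ))‖ = g := by
    rw [Complex.norm_real, Real.norm_eq_abs, _root_.abs_of_nonneg hg0]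
  calc (∫ α in (0:ℝ)..2*π, ‖(1 + E α)‖ ^ p) * d ^ p
      = ∫ α in (0:ℝ)..2*π, ‖(1 + E α)‖ ^ p * d ^ p :=
        (intervalIntegral.integral_mul_const _ _).symm
    _ = ∫ α in (0:ℝ)..2*π, ‖((d:ℂ) + E α * (d:ℂ))‖ ^ p := by
        apply intervalIntegral.integral_congr
        intro α _
        show ‖(1 + E α)‖ ^ p * d ^ p = ‖((d:ℂ) + E α * (d:ℂ))‖ ^ p
        rw [← Real.mul_rpow (norm_nonneg _) hd0]
        congr 1
        rw [show (d:ℂ) + E α * (d:ℂ) = (1 + E α) * (d:ℂ) by ring, norm_mul, habs_d]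
    _ ≤ ∫ α in (0:ℝ)..2*π, ‖((d:ℂ) + E α * (g:ℂ))‖ ^ p := by
        apply intervalIntegral.integral_mono_on h2π
        · apply Continuous.intervalIntegrable
          exact (continuous_norm.comp
            (continuous_const.add (contE.mul continuous_const))).rpow_const
            (fun _ => Or.inr (by linarith))
        · apply Continuous.intervalIntegrable
          exact (continuous_norm.comp
            (continuous_const.add (contE.mul continuous_const))).rpow_const
            (fun _ => Or.inr (by linarith))
        · intro α _
          exact Real.rpow_le_rpow (norm_nonneg _) (abs_mono_pt d g hd0 hdg α)
            (by linarith)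
    _ = ∫ α in (0:ℝ)..2*π, (g ^ 2 + d ^ 2 +
          2 * (g * d) * Real.cos α) ^ (p/2) := by
        rw [canon p ((d:ℂ)) ((g:ℂ))]
        apply intervalIntegral.integral_congr
        intro α _
        show (‖((d:ℂ))‖ ^ 2 + ‖((g:ℂ))‖ ^ 2 +
            2 * (‖((d:ℂ))‖ * ‖((g:ℂ))‖) * Real.cos α) ^ (p/2) =
          (g ^ 2 + d ^ 2 + 2 * (g * d) * Real.cos α) ^ (p/2)
        rw [habs_d, habs_g]
        ring_nf
    _ = ∫ α in (0:ℝ)..2*π, ‖(((n:ℂ) * P.eval (E θ) -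
          E θ * P.derivative.eval (E θ)) + E α * (E θ * P.derivative.eval (E θ)))‖ ^ p := by
        rw [canon p ((n:ℂ) * P.eval (E θ) - E θ * P.derivative.eval (E θ))
          (E θ * P.derivative.eval (E θ))]
        apply intervalIntegral.integral_congr
        intro α _
        rw [show ‖(E θ * P.derivative.eval (E θ))‖ = d by
          rw [norm_mul, abs_E, one_mul]]

lemma interval_fubini (F : ℝ → ℝ → ℝ) (hF : Continuous (Function.uncurry F)) :
    (∫ x in (0:ℝ)..2*π, ∫ y in (0:ℝ)..2*π, F x y) =
      ∫ y in (0:ℝ)..2*π, ∫ x in (0:ℝ)..2*π, F x y := by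
  have h2π : (0:ℝ) ≤ 2*π := by positivity
  simp only [intervalIntegral.integral_of_le h2π]
  apply MeasureTheory.integral_integral_swap
  rw [Measure.prod_restrict]
  apply MeasureTheory.IntegrableOn.mono_set
    (t := Set.Icc (0:ℝ) (2*π) ×ˢ Set.Icc (0:ℝ) (2*π)) _
    (Set.prod_mono Set.Ioc_subset_Icc_self Set.Ioc_subset_Icc_self)
  rw [← Measure.volume_eq_prod]
  exact (hF.continuousOn).integrableOn_compact (isCompact_Icc.prod isCompact_Icc)

lemma Ip_pos (p : ℝ) (hp : 1 ≤ p) :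
    0 < ∫ α in (0:ℝ)..2*π, ‖(1 + E α)‖ ^ p := by
  have hcont : Continuous fun α : ℝ => ‖(1 + E α)‖ ^ p :=
    (continuous_norm.comp (continuous_const.add contE)).rpow_const
      (fun _ => Or.inr (by linarith))
  have hπ : (0:ℝ) < π := Real.pi_pos
  have hsplit : (∫ α in (0:ℝ)..π/2, ‖(1 + E α)‖ ^ p) +
      (∫ α in (π/2:ℝ)..2*π, ‖(1 + E α)‖ ^ p) =
      ∫ α in (0:ℝ)..2*π, ‖(1 + E α)‖ ^ p :=
    intervalIntegral.integral_add_adjacent_intervals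
      (hcont.intervalIntegrable _ _) (hcont.intervalIntegrable _ _)
  have h1 : 0 < ∫ α in (0:ℝ)..π/2, ‖(1 + E α)‖ ^ p := by
    apply intervalIntegral.intervalIntegral_pos_of_pos_on (hcont.intervalIntegrable _ _)
    · intro α hα
      obtain ⟨hα1, hα2⟩ := hα
      have hne : (1 + E α) ≠ 0 := by
        intro h
        have hre : (1 + E α).re = 0 := by rw [h]; rfl
        have : (E α).re = Real.cos α := Complex.exp_ofReal_mul_I_re α
        rw [Complex.add_re, Complex.one_re, this] at hre
        have hcos : 0 < Real.cos α := by
          apply Real.cos_pos_of_mem_Ioo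
          constructor <;> [linarith; linarith]
        linarith
      exact Real.rpow_pos_of_pos (norm_pos_iff.mpr hne) p
    · linarith
  have h2 : 0 ≤ ∫ α in (π/2:ℝ)..2*π, ‖(1 + E α)‖ ^ p := by
    apply intervalIntegral.integral_nonneg (by linarith)
    intro u _
    positivity
  linarith

lemma main_ineq (n : ℕ) (hn : 0 < n) (P : Polynomial ℂ) (hPn : P.natDegree = n)
    (hzeros : ∀ z : ℂ, ‖z‖ < 1 → P.eval z ≠ 0) (p : ℝ) (hp : 1 ≤ p) :
    (∫ θ in (0:ℝ)..2*π, ‖(P.derivative.eval (E θ))‖ ^ p) *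
        (∫ α in (0:ℝ)..2*π, ‖(1 + E α)‖ ^ p) ≤
      (2*π) * ((n:ℝ)^p * ∫ θ in (0:ℝ)..2*π, ‖(P.eval (E θ))‖ ^ p) := by
  have h2π : (0:ℝ) ≤ 2*π := by positivity
  set H : ℝ → ℝ → ℝ := fun θ α =>
    ‖(((n:ℂ) * P.eval (E θ) - E θ * P.derivative.eval (E θ)) +
      E α * (E θ * P.derivative.eval (E θ)))‖ ^ p with hH
  have hHcont : Continuous (Function.uncurry H) := by
    apply Continuous.rpow_const _ (fun _ => Or.inr (by linarith))
    apply continuous_norm.comp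
    exact (((continuous_const.mul ((contPE P).comp continuous_fst)).sub
      ((contE.comp continuous_fst).mul ((contPE P.derivative).comp continuous_fst))).add
      ((contE.comp continuous_snd).mul
        ((contE.comp continuous_fst).mul ((contPE P.derivative).comp continuous_fst))))
  have hDcont : Continuous fun θ : ℝ => ‖(P.derivative.eval (E θ))‖ ^ p :=
    (continuous_norm.comp (contPE P.derivative)).rpow_const
      (fun _ => Or.inr (by linarith))
  have hparam1 : Continuous fun θ : ℝ => ∫ α in (0:ℝ)..2*π, H θ α :=
    intervalIntegral.continuous_parametric_intervalIntegral_of_continuous' hHcont 0 (2*π)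
  have hparam2 : Continuous fun α : ℝ => ∫ θ in (0:ℝ)..2*π, H θ α := by
    apply intervalIntegral.continuous_parametric_intervalIntegral_of_continuous'
      (f := fun α θ => H θ α) _ 0 (2*π)
    have : Function.uncurry (fun α θ => H θ α) = (Function.uncurry H) ∘ Prod.swap := by
      ext q; rfl
    rw [this]
    exact hHcont.comp continuous_swap
  calc (∫ θ in (0:ℝ)..2*π, ‖(P.derivative.eval (E θ))‖ ^ p) *
        (∫ α in (0:ℝ)..2*π, ‖(1 + E α)‖ ^ p)
      = ∫ θ in (0:ℝ)..2*π, (‖(P.derivative.eval (E θ))‖ ^ p *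
          ∫ α in (0:ℝ)..2*π, ‖(1 + E α)‖ ^ p) :=
        (intervalIntegral.integral_mul_const _ _).symm
    _ ≤ ∫ θ in (0:ℝ)..2*π, ∫ α in (0:ℝ)..2*π, H θ α := by
        apply intervalIntegral.integral_mono_on h2π
          ((hDcont.mul continuous_const).intervalIntegrable _ _)
          (hparam1.intervalIntegrable _ _)
        intro θ _
        rw [mul_comm]
        exact theta_chain n P hPn hzeros p hp θ
    _ = ∫ α in (0:ℝ)..2*π, ∫ θ in (0:ℝ)..2*π, H θ α := interval_fubini H hHcont
    _ ≤ ∫ α in (0:ℝ)..2*π, ((n:ℝ)^p * ∫ θ in (0:ℝ)..2*π, ‖(P.eval (E θ))‖ ^ p) := by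
        apply intervalIntegral.integral_mono_on h2π
          (hparam2.intervalIntegrable _ _) (continuous_const.intervalIntegrable _ _)
        intro α _
        exact slice_bound n hn P hPn p hp α
    _ = (2*π) * ((n:ℝ)^p * ∫ θ in (0:ℝ)..2*π, ‖(P.eval (E θ))‖ ^ p) := by
        rw [intervalIntegral.integral_const, smul_eq_mul, sub_zero]

end DeBruijn

end DeBruijnAux

open DeBruijn in
theorem de_bruijn_inequality (n : ℕ) (P : Polynomial ℂ) (hP : P.natDegree = n)
    (hzeros : ∀ z : ℂ, ‖z‖ < 1 → P.eval z ≠ 0) (p : ℝ) (hp : 1 ≤ p) :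
    (∫ θ in (0:ℝ)..(2 * π),
        ‖P.derivative.eval (Complex.exp (θ * Complex.I))‖ ^ p) ^ (1 / p) ≤
      (n : ℝ) *
        ((1 / (2 * π)) * ∫ φ in (0:ℝ)..(2 * π),
          ‖1 + Complex.exp (φ * Complex.I)‖ ^ p) ^ (-(1 / p)) *
        (∫ θ in (0:ℝ)..(2 * π),
          ‖P.eval (Complex.exp (θ * Complex.I))‖ ^ p) ^ (1 / p) := by
  have hp0 : p ≠ 0 := by linarith
  have h2π : (0:ℝ) ≤ 2*π := by positivity
  show (∫ θ in (0:ℝ)..(2 * π), ‖(P.derivative.eval (E θ))‖ ^ p) ^ (1 / p) ≤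
      (n : ℝ) * ((1 / (2 * π)) * ∫ φ in (0:ℝ)..(2 * π),
          ‖(1 + E φ)‖ ^ p) ^ (-(1 / p)) *
        (∫ θ in (0:ℝ)..(2 * π), ‖(P.eval (E θ))‖ ^ p) ^ (1 / p)
  rcases Nat.eq_zero_or_pos n with hn0 | hn
  · subst hn0
    have hC := Polynomial.eq_C_of_natDegree_eq_zero hP
    have hd0 : P.derivative = 0 := by rw [hC]; exact derivative_C
    have hip0 : 1/p ≠ 0 := one_div_ne_zero hp0
    rw [hd0]
    simp only [eval_zero, map_zero, norm_zero, Real.zero_rpow hp0, intervalIntegral.integral_zero,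
      Real.zero_rpow hip0, Nat.cast_zero, zero_mul]
    exact le_refl 0
  · have key := main_ineq n hn P hP hzeros p hp
    have hIp := Ip_pos p hp
    set I1 := ∫ θ in (0:ℝ)..2*π, ‖(P.derivative.eval (E θ))‖ ^ p with hI1def
    set I0 := ∫ θ in (0:ℝ)..2*π, ‖(P.eval (E θ))‖ ^ p with hI0def
    set Ip := ∫ α in (0:ℝ)..2*π, ‖(1 + E α)‖ ^ p with hIpdef
    have hI0 : 0 ≤ I0 := by
      rw [hI0def]
      apply intervalIntegral.integral_nonneg h2π
      intro u _
      positivity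
    have hI1 : 0 ≤ I1 := by
      rw [hI1def]
      apply intervalIntegral.integral_nonneg h2π
      intro u _
      positivity
    set Q := (1/(2*π)) * Ip with hQdef
    have hQ : 0 < Q := by
      apply mul_pos _ hIp
      positivity
    have h6 : I1 * Q ≤ (n:ℝ)^p * I0 := by
      have h := mul_le_mul_of_nonneg_left key (show (0:ℝ) ≤ 1/(2*π) by positivity)
      have hπ : (2*π : ℝ) ≠ 0 := by positivity
      calc I1 * Q = 1/(2*π) * (I1 * Ip) := by rw [hQdef]; ring
        _ ≤ 1/(2*π) * (2*π * ((n:ℝ)^p * I0)) := h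
        _ = (n:ℝ)^p * I0 := by field_simp
    have h7 : I1 ≤ (n:ℝ)^p * Q⁻¹ * I0 := by
      have h := mul_le_mul_of_nonneg_right h6 (inv_nonneg.mpr hQ.le)
      calc I1 = I1 * Q * Q⁻¹ := by field_simp
        _ ≤ (n:ℝ)^p * I0 * Q⁻¹ := h
        _ = (n:ℝ)^p * Q⁻¹ * I0 := by ring
    have hnp : (0:ℝ) ≤ (n:ℝ)^p := Real.rpow_nonneg (Nat.cast_nonneg n) p
    calc I1 ^ (1/p) ≤ ((n:ℝ)^p * Q⁻¹ * I0) ^ (1/p) :=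
          Real.rpow_le_rpow hI1 h7 (by positivity)
      _ = ((n:ℝ)^p) ^ (1/p) * (Q⁻¹) ^ (1/p) * I0 ^ (1/p) := by
          rw [Real.mul_rpow (mul_nonneg hnp (inv_nonneg.mpr hQ.le)) hI0,
            Real.mul_rpow hnp (inv_nonneg.mpr hQ.le)]
      _ = (n:ℝ) * Q ^ (-(1/p)) * I0 ^ (1/p) := by
          congr 2
          · rw [← Real.rpow_mul (Nat.cast_nonneg n), mul_one_div_cancel hp0, Real.rpow_one]
          · rw [Real.inv_rpow hQ.le, ← Real.rpow_neg hQ.le]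
end

section
/- For every complex number ξ with |ξ| ≥ 1 and every real p ≥ 0, (∫₀^{2π} |ξ + e^{iφ}|^p dφ)^{1/p} ≥ (∫₀^{2π} |1 + e^{iφ}|^p dφ)^{1/p}. -/
open Real

lemma key_abs_le (r ψ : ℝ) (hr : 1 ≤ r) :
    ‖1 + Complex.exp (ψ * Complex.I)‖ ≤
      ‖(r : ℂ) + Complex.exp (ψ * Complex.I)‖ := by
  rw [Complex.norm_def, Complex.norm_def]
  apply Real.sqrt_le_sqrt
  simp [Complex.normSq_apply, Complex.exp_mul_I, Complex.cos_ofReal_re, Complex.sin_ofReal_re]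
  nlinarith [Real.sin_sq_add_cos_sq ψ, Real.neg_one_le_cos ψ]

lemma f_periodic (p : ℝ) :
    Function.Periodic (fun φ : ℝ => ‖1 + Complex.exp (φ * Complex.I)‖ ^ p)
      (2 * π) := by
  intro φ
  simp [add_mul, Complex.exp_add, Complex.exp_two_pi_mul_I]

theorem mean_xi_ge (ξ : ℂ) (hξ : 1 ≤ ‖ξ‖) (p : ℝ) (hp : 0 ≤ p) :
    (∫ φ in (0:ℝ)..(2 * π),
        ‖1 + Complex.exp (φ * Complex.I)‖ ^ p) ^ (1 / p) ≤
      (∫ φ in (0:ℝ)..(2 * π),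
        ‖ξ + Complex.exp (φ * Complex.I)‖ ^ p) ^ (1 / p) := by
  set θ := ξ.arg with hθ
  set f : ℝ → ℝ := fun φ => ‖1 + Complex.exp (φ * Complex.I)‖ ^ p with hf
  have hfc : Continuous f := by
    apply Continuous.rpow_const
    · exact continuous_norm.comp (by continuity)
    · exact fun x => Or.inr hp
  -- rotation identity
  have hrot : ∀ φ : ℝ, ‖ξ + Complex.exp (φ * Complex.I)‖ =
      ‖(‖ξ‖ : ℂ) + Complex.exp (((φ - θ : ℝ)) * Complex.I)‖ := by
    intro φ
    have h1 : ξ + Complex.exp (φ * Complex.I) =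
        Complex.exp (θ * Complex.I) *
          ((‖ξ‖ : ℂ) + Complex.exp (((φ - θ : ℝ)) * Complex.I)) := by
      rw [mul_add]
      congr 1
      · rw [mul_comm]; exact (Complex.norm_mul_exp_arg_mul_I ξ).symm
      · rw [← Complex.exp_add]
        congr 1
        push_cast; ring
    rw [h1, norm_mul, Complex.norm_exp_ofReal_mul_I, one_mul]
  -- pointwise inequality
  have hpw : ∀ φ : ℝ, f (φ - θ) ≤ ‖ξ + Complex.exp (φ * Complex.I)‖ ^ p := by
    intro φ
    rw [hrot φ]
    exact Real.rpow_le_rpow (norm_nonneg _) (key_abs_le _ _ hξ) hp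
  -- shift the LHS integral
  have hshift : (∫ φ in (0:ℝ)..(2 * π), f φ) = ∫ φ in (0:ℝ)..(2 * π), f (φ - θ) := by
    rw [intervalIntegral.integral_comp_sub_right f θ]
    have := (f_periodic p).intervalIntegral_add_eq (0 - θ) 0
    have e1 : (0:ℝ) - θ + 2 * π = 2 * π - θ := by ring
    rw [e1, zero_add] at this
    exact this.symm
  have hmono : (∫ φ in (0:ℝ)..(2 * π), f φ) ≤
      ∫ φ in (0:ℝ)..(2 * π), ‖ξ + Complex.exp (φ * Complex.I)‖ ^ p := by
    rw [hshift]
    apply intervalIntegral.integral_mono_on (by positivity)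
    · exact ((hfc.comp (continuous_id.sub continuous_const)).intervalIntegrable _ _)
    · exact ((Continuous.rpow_const
        (continuous_norm.comp (by continuity)) fun x => Or.inr hp).intervalIntegrable _ _)
    · exact fun x _ => hpw x
  have h0 : 0 ≤ ∫ φ in (0:ℝ)..(2 * π), f φ := by
    apply intervalIntegral.integral_nonneg (by positivity)
    intro x _
    positivity
  exact Real.rpow_le_rpow h0 hmono (by positivity)
end
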